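/- arXiv:2005.11381 — 2 statements merged into one kernel-verified Lean document; each statement's English description precedes it below -/
import Mathlib

section
/- Let W_i = {−(n+β_i)/α_i : n ∈ ℕ ∪ {0}}, i = 1, 2, be two γ-sets. Then either the set difference W_1 \ W_2 is finite, or its density D(W_1 \ W_2) exists and is strictly positive; moreover, in the latter case W_1 \ W_2 is the union of finitely many γ-sets and a finite set. -/
open Filter Topology

noncomputable section

/-- The γ(α,β)-set `{−(n+β)/α : n ∈ ℕ ∪ {0}} ⊆ ℂ`. -/
def gammaSet (α : ℝ) (β : ℂ) : Set ℂ :=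
  {z : ℂ | ∃ n : ℕ, z = -((n : ℂ) + β) / (α : ℂ)}

/-- The counting function `N_S(T) = |S ∩ {s : Re s > −T}|` of a subset of ℂ. -/
def countFun (S : Set ℂ) (T : ℝ) : ℕ :=
  (S ∩ {s : ℂ | -T < s.re}).ncard

/-- `S` has density `d` if `N_S(T)/T → d` as `T → ∞`. -/
def HasDensity (S : Set ℂ) (d : ℝ) : Prop :=
  Tendsto (fun T : ℝ => (countFun S T : ℝ) / T) atTop (𝓝 d)

end


lemma re_calc (α : ℝ) (β : ℂ) (n : ℕ) :
    (-((n : ℂ) + β) / (α : ℂ)).re = -((n : ℝ) + β.re) / α := by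
  rw [Complex.div_ofReal_re]; simp

lemma re_iff (α : ℝ) (hα : 0 < α) (β : ℂ) (n : ℕ) (T : ℝ) :
    -T < (-((n : ℂ) + β) / (α : ℂ)).re ↔ (n : ℝ) < α * T - β.re := by
  rw [re_calc, neg_div, neg_lt_neg_iff, div_lt_iff₀ hα]
  constructor <;> intro h <;> linarith

lemma g_inj (α : ℝ) (hα : α ≠ 0) (β : ℂ) :
    Function.Injective (fun n : ℕ => -((n : ℂ) + β) / (α : ℂ)) := by
  intro n m h
  have hαc : (α : ℂ) ≠ 0 := by exact_mod_cast hα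
  have : (n : ℂ) = m := by
    field_simp at h
    linear_combination -h
  exact_mod_cast this

lemma countFun_image (α : ℝ) (hα : 0 < α) (β : ℂ) (A : Set ℕ) (T : ℝ) :
    countFun ((fun n : ℕ => -((n : ℂ) + β) / (α : ℂ)) '' A) T
      = (A ∩ Set.Iio ⌈α * T - β.re⌉₊).ncard := by
  have hset : ((fun n : ℕ => -((n : ℂ) + β) / (α : ℂ)) '' A) ∩ {s : ℂ | -T < s.re}
      = (fun n : ℕ => -((n : ℂ) + β) / (α : ℂ)) '' (A ∩ Set.Iio ⌈α * T - β.re⌉₊) := by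
    ext z
    simp only [Set.mem_inter_iff, Set.mem_image, Set.mem_setOf_eq, Set.mem_Iio]
    constructor
    · rintro ⟨⟨n, hn, rfl⟩, hre⟩
      exact ⟨n, ⟨hn, Nat.lt_ceil.mpr ((re_iff α hα β n T).mp hre)⟩, rfl⟩
    · rintro ⟨n, ⟨hn, hlt⟩, rfl⟩
      exact ⟨⟨n, hn, rfl⟩, (re_iff α hα β n T).mpr (Nat.lt_ceil.mp hlt)⟩
  rw [countFun, hset, Set.ncard_image_of_injective _ (g_inj α hα.ne' β)]

lemma hasDensity_image (α : ℝ) (hα : 0 < α) (β : ℂ) (A : Set ℕ) (ρ C : ℝ)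
    (hρ : 0 ≤ ρ)
    (h : ∀ N : ℕ, |((A ∩ Set.Iio N).ncard : ℝ) - ρ * N| ≤ C) :
    HasDensity ((fun n : ℕ => -((n : ℂ) + β) / (α : ℂ)) '' A) (ρ * α) := by
  rw [HasDensity]
  rw [← tendsto_sub_nhds_zero_iff]
  have hK : Tendsto (fun T : ℝ => (C + ρ * (1 + |β.re|)) / T) atTop (𝓝 0) := by
    simpa [div_eq_mul_inv] using tendsto_inv_atTop_zero.const_mul (C + ρ * (1 + |β.re|))
  refine squeeze_zero_norm' ?_ hK
  filter_upwards [eventually_ge_atTop (max 1 (β.re / α))] with T hT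
  have hT1 : (1:ℝ) ≤ T := le_trans (le_max_left _ _) hT
  have hT0 : (0:ℝ) < T := lt_of_lt_of_le one_pos hT1
  have hx0 : 0 ≤ α * T - β.re := by
    have := le_trans (le_max_right _ _) hT
    rw [div_le_iff₀ hα] at this
    linarith
  set x := α * T - β.re with hxdef
  set N := ⌈x⌉₊ with hN
  have h1 : x ≤ (N : ℝ) := Nat.le_ceil x
  have h2 : (N : ℝ) < x + 1 := Nat.ceil_lt_add_one hx0
  rw [countFun_image α hα β A T]
  have hcnt := h N
  have key : |((A ∩ Set.Iio N).ncard : ℝ) - ρ * α * T| ≤ C + ρ * (1 + |β.re|) := by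
    have h3 : |ρ * N - ρ * α * T| ≤ ρ * (1 + |β.re|) := by
      have : ρ * N - ρ * α * T = ρ * ((N : ℝ) - x - β.re) := by rw [hxdef]; ring
      rw [this, abs_mul, abs_of_nonneg hρ]
      have : |(N:ℝ) - x - β.re| ≤ 1 + |β.re| := by
        have := abs_sub_abs_le_abs_sub ((N:ℝ) - x) β.re
        have h4 : |(N:ℝ) - x| ≤ 1 := by rw [abs_le]; constructor <;> linarith
        have := abs_sub ((N:ℝ) - x) β.re
        calc |(N:ℝ) - x - β.re| ≤ |(N:ℝ) - x| + |β.re| := abs_sub _ _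
          _ ≤ 1 + |β.re| := by linarith
      exact mul_le_mul_of_nonneg_left this hρ
    calc |((A ∩ Set.Iio N).ncard : ℝ) - ρ * α * T|
        ≤ |((A ∩ Set.Iio N).ncard : ℝ) - ρ * N| + |ρ * N - ρ * α * T| := abs_sub_le _ _ _
      _ ≤ C + ρ * (1 + |β.re|) := add_le_add hcnt h3
  rw [Real.norm_eq_abs]
  have : ((A ∩ Set.Iio N).ncard : ℝ) / T - ρ * α
      = (((A ∩ Set.Iio N).ncard : ℝ) - ρ * α * T) / T := by field_simp
  rw [this, abs_div, abs_of_pos hT0, div_le_div_iff₀ hT0 hT0]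
  calc |((A ∩ Set.Iio N).ncard : ℝ) - ρ * α * T| * T
      ≤ (C + ρ * (1 + |β.re|)) * T := by
        exact mul_le_mul_of_nonneg_right key hT0.le
    _ = (C + ρ * (1 + |β.re|)) * T := rfl


lemma iio_ncard (N : ℕ) : (Set.Iio N).ncard = N := by
  rw [← Finset.coe_range, Set.ncard_coe_finset]; simp

lemma inter_iio_finite (B : Set ℕ) (N : ℕ) : (B ∩ Set.Iio N).Finite :=
  (Set.finite_Iio N).subset Set.inter_subset_right

lemma cnt_res (q res : ℕ) (hq : 0 < q) (hres : res < q) (N : ℕ) :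
    |(({n : ℕ | n % q = res} ∩ Set.Iio N).ncard : ℝ) - N / q| ≤ res + 1 := by
  have hq' : (1:ℝ) ≤ q := by exact_mod_cast hq
  have hq0 : (0:ℝ) < q := by linarith
  rcases le_or_gt N res with hNr | hrN
  · have hempty : {n : ℕ | n % q = res} ∩ Set.Iio N = ∅ := by
      ext n
      simp only [Set.mem_inter_iff, Set.mem_setOf_eq, Set.mem_Iio, Set.mem_empty_iff_false,
        iff_false, not_and]
      intro hmod hn
      have : n % q ≤ n := Nat.mod_le n q
      omega
    rw [hempty, Set.ncard_empty]
    have h1 : (N : ℝ) / q ≤ res := by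
      rw [div_le_iff₀ hq0]
      have hN : (N:ℝ) ≤ res := by exact_mod_cast hNr
      nlinarith [Nat.cast_nonneg (α := ℝ) res]
    have h2 : (0:ℝ) ≤ (N:ℝ)/q := by positivity
    rw [abs_le]
    simp only [Nat.cast_zero, zero_sub]
    constructor <;> [linarith; linarith [Nat.cast_nonneg (α := ℝ) res]]
  · -- res < N
    set D := N - 1 - res with hD
    set K := D / q + 1 with hK
    have hset : {n : ℕ | n % q = res} ∩ Set.Iio N = (fun k => q * k + res) '' Set.Iio K := by
      ext n
      simp only [Set.mem_inter_iff, Set.mem_setOf_eq, Set.mem_Iio, Set.mem_image]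
      constructor
      · rintro ⟨hmod, hn⟩
        have h1 : q * (n / q) + res = n := by
          conv_rhs => rw [← Nat.div_add_mod n q]
          rw [hmod]
        refine ⟨n / q, ?_, h1⟩
        have h2 : n / q * q ≤ D := by rw [mul_comm]; omega
        have : n / q ≤ D / q := (Nat.le_div_iff_mul_le hq).mpr h2
        omega
      · rintro ⟨k, hk, rfl⟩
        constructor
        · rw [Nat.mul_add_mod, Nat.mod_eq_of_lt hres]
        · have h1 : k ≤ D / q := by omega
          have h2 : q * k ≤ q * (D / q) := Nat.mul_le_mul_left q h1
          have h3 : q * (D / q) ≤ D := Nat.mul_div_le D q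
          omega
    rw [hset, Set.ncard_image_of_injective _ (fun a b hab =>
      Nat.eq_of_mul_eq_mul_left hq (Nat.add_right_cancel hab)), iio_ncard]
    have hDval : (D : ℝ) = (N : ℝ) - 1 - res := by
      have h1 : D = N - (1 + res) := by omega
      rw [h1, Nat.cast_sub (by omega)]
      push_cast; ring
    have fact1 : ((D / q : ℕ) : ℝ) ≤ (D:ℝ)/q := Nat.cast_div_le
    have fact2 : (D:ℝ)/q < ((D / q : ℕ) : ℝ) + 1 := by
      have hmod := Nat.div_add_mod D q
      have hmlt : D % q < q := Nat.mod_lt D hq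
      have e : (D:ℝ) = (q:ℝ) * ((D / q : ℕ) : ℝ) + ((D % q : ℕ) : ℝ) := by
        exact_mod_cast hmod.symm
      have hm : ((D % q : ℕ) : ℝ) < q := by exact_mod_cast hmlt
      rw [div_lt_iff₀ hq0]
      nlinarith
    have e1 : (N:ℝ)/q - (D:ℝ)/q = (1+res)/q := by rw [hDval]; ring
    have e2 : (1+(res:ℝ))/q ≤ 1+res := div_le_self (by positivity) hq'
    have e3 : (0:ℝ) ≤ (1+(res:ℝ))/q := by positivity
    have hKval : ((K:ℕ):ℝ) = ((D / q : ℕ) : ℝ) + 1 := by rw [hK]; push_cast; ring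
    rw [hKval, abs_le]
    constructor <;> [linarith; linarith [Nat.cast_nonneg (α := ℝ) res]]

lemma cnt_mod (q res : ℕ) (hq : 0 < q) (hres : res < q) (N : ℕ) :
    |(({n : ℕ | n % q ≠ res} ∩ Set.Iio N).ncard : ℝ) - (1 - 1/q) * N| ≤ res + 1 := by
  have hsub : {n : ℕ | n % q = res} ∩ Set.Iio N ⊆ Set.Iio N := Set.inter_subset_right
  have hdiff : {n : ℕ | n % q ≠ res} ∩ Set.Iio N = Set.Iio N \ ({n : ℕ | n % q = res} ∩ Set.Iio N) := by
    ext n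
    simp only [Set.mem_inter_iff, Set.mem_setOf_eq, Set.mem_Iio, Set.mem_diff, not_and]
    tauto
  rw [hdiff, Set.ncard_diff hsub (inter_iio_finite _ _)]
  have hle : ({n : ℕ | n % q = res} ∩ Set.Iio N).ncard ≤ N :=
    le_trans (Set.ncard_le_ncard hsub (Set.finite_Iio N)) (le_of_eq (iio_ncard N))
  rw [iio_ncard, Nat.cast_sub hle]
  have h := cnt_res q res hq hres N
  have hq0 : (0:ℝ) < q := by exact_mod_cast hq
  have e : (N:ℝ) - (({n : ℕ | n % q = res} ∩ Set.Iio N).ncard : ℝ) - (1 - 1/q) * N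
      = -( (({n : ℕ | n % q = res} ∩ Set.Iio N).ncard : ℝ) - N/q ) := by
    field_simp
    ring
  rw [e, abs_neg]
  exact h

lemma cnt_perturb {A A' : Set ℕ} {N₀ : ℕ} (h : ∀ n, N₀ ≤ n → (n ∈ A ↔ n ∈ A')) (N : ℕ) :
    |((A ∩ Set.Iio N).ncard : ℝ) - ((A' ∩ Set.Iio N).ncard : ℝ)| ≤ N₀ := by
  have key : ∀ B B' : Set ℕ, (∀ n, N₀ ≤ n → (n ∈ B ↔ n ∈ B')) →
      (B ∩ Set.Iio N).ncard ≤ (B' ∩ Set.Iio N).ncard + N₀ := by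
    intro B B' hBB
    have hsub : B ∩ Set.Iio N ⊆ (B' ∩ Set.Iio N) ∪ Set.Iio N₀ := by
      rintro n ⟨hn, hlt⟩
      rcases lt_or_ge n N₀ with h1 | h1
      · exact Or.inr h1
      · exact Or.inl ⟨(hBB n h1).mp hn, hlt⟩
    calc (B ∩ Set.Iio N).ncard ≤ ((B' ∩ Set.Iio N) ∪ Set.Iio N₀).ncard :=
          Set.ncard_le_ncard hsub ((inter_iio_finite _ _).union (Set.finite_Iio _))
      _ ≤ (B' ∩ Set.Iio N).ncard + (Set.Iio N₀).ncard := Set.ncard_union_le _ _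
      _ = (B' ∩ Set.Iio N).ncard + N₀ := by rw [iio_ncard]
  have h1 := key A A' h
  have h2 := key A' A (fun n hn => (h n hn).symm)
  rw [abs_le]
  constructor
  · have : ((A' ∩ Set.Iio N).ncard : ℝ) ≤ (A ∩ Set.Iio N).ncard + N₀ := by exact_mod_cast h2
    linarith
  · have : ((A ∩ Set.Iio N).ncard : ℝ) ≤ (A' ∩ Set.Iio N).ncard + N₀ := by exact_mod_cast h1
    linarith

lemma P_structure (u b : ℝ) (hu : 0 < u) :
    (∃ N : ℕ, ∀ n, N ≤ n → ∃ m : ℕ, (m:ℝ) = u*n + b) ∨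
    (∃ N : ℕ, ∀ n : ℕ, (∃ m : ℕ, (m:ℝ) = u*n + b) → n < N) ∨
    (∃ q res N : ℕ, 2 ≤ q ∧ res < q ∧ q ∣ N ∧
      ∀ n, N ≤ n → ((∃ m : ℕ, (m:ℝ) = u*n + b) ↔ n % q = res)) := by
  by_cases hrat : ∃ s : ℚ, (s:ℝ) = u
  swap
  · -- irrational: at most one solution
    right; left
    by_cases hex : ∃ n : ℕ, ∃ m : ℕ, (m:ℝ) = u*n + b
    · obtain ⟨n₀, hn₀⟩ := hex
      refine ⟨n₀ + 1, fun n hn => ?_⟩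
      by_contra hge
      push_neg at hge
      have hne : n ≠ n₀ := by omega
      obtain ⟨m, hm⟩ := hn
      obtain ⟨m₀, hm₀⟩ := hn₀
      exfalso
      apply hrat
      refine ⟨((m:ℤ) - m₀ : ℤ) / ((n:ℤ) - n₀ : ℤ), ?_⟩
      have hden : ((n:ℝ) - n₀) ≠ 0 := by
        have : (n:ℝ) ≠ n₀ := by exact_mod_cast hne
        intro h; apply this; linarith
      have : u * ((n:ℝ) - n₀) = (m:ℝ) - m₀ := by linarith
      rw [Rat.cast_div]
      push_cast
      field_simp
      linarith [this]
    · exact ⟨0, fun n hn => absurd ⟨n, hn⟩ hex⟩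
  · obtain ⟨s, hs⟩ := hrat
    have hs0 : 0 < s := by
      have : (0:ℝ) < (s:ℝ) := by rw [hs]; exact hu
      exact_mod_cast this
    set q := s.den with hqdef
    set p := s.num.natAbs with hpdef
    have hq : 0 < q := s.pos
    have hnum : 0 < s.num := Rat.num_pos.mpr hs0
    have hp : 0 < p := by positivity
    have hcop : Nat.Coprime p q := s.reduced
    have hpnum : ((p:ℤ):ℝ) = (s.num : ℝ) := by
      rw [hpdef]; norm_cast; exact abs_of_nonneg hnum.le
    have hufrac : u = (p:ℝ)/q := by
      rw [← hs, Rat.cast_def]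
      congr 1
      exact_mod_cast hpnum.symm
    have hq0 : (0:ℝ) < q := by exact_mod_cast hq
    -- P n ↔ ∃ m, (m:ℝ)*q = p*n + b*q
    have hP1 : ∀ n : ℕ, (∃ m : ℕ, (m:ℝ) = u*n + b) ↔ (∃ m : ℕ, (m:ℝ)*q = p*n + b*q) := by
      intro n
      constructor
      · rintro ⟨m, hm⟩; exact ⟨m, by rw [hm, hufrac]; field_simp⟩
      · rintro ⟨m, hm⟩
        refine ⟨m, ?_⟩
        rw [hufrac]
        field_simp
        linarith [hm]
    by_cases hbq : ∃ a : ℤ, (a:ℝ) = b * q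
    swap
    · right; left
      refine ⟨0, fun n hn => ?_⟩
      exfalso
      obtain ⟨m, hm⟩ := (hP1 n).mp hn
      exact hbq ⟨(m:ℤ)*q - p*n, by push_cast; linarith⟩
    obtain ⟨a, ha⟩ := hbq
    have hP2 : ∀ n : ℕ, (∃ m : ℕ, (m:ℝ) = u*n + b) ↔
        ((q:ℤ) ∣ ((p:ℤ)*n + a) ∧ 0 ≤ (p:ℤ)*n + a) := by
      intro n
      rw [hP1]
      constructor
      · rintro ⟨m, hm⟩
        have hint : (m:ℤ)*q = (p:ℤ)*n + a := by
          have : ((m:ℤ)*q : ℝ) = ((p:ℤ)*n + a : ℝ) := by push_cast; push_cast at hm; linarith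
          exact_mod_cast this
        constructor
        · exact ⟨m, by linarith [hint]⟩
        · rw [← hint]; positivity
      · rintro ⟨⟨t, ht⟩, hpos⟩
        have ht0 : 0 ≤ t := by
          by_contra h
          push_neg at h
          have : (q:ℤ) * t < 0 := mul_neg_of_pos_of_neg (by exact_mod_cast hq) h
          omega
        refine ⟨t.toNat, ?_⟩
        have : ((t.toNat : ℤ) : ℝ) * q = ((p:ℤ)*n + a : ℝ) := by
          rw [Int.toNat_of_nonneg ht0]
          exact_mod_cast congrArg (fun z : ℤ => (z:ℝ)) (by linarith [ht] : t * q = (p:ℤ)*n + a)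
        push_cast at this ⊢
        linarith [this]
    -- residue via ZMod
    haveI : NeZero q := ⟨hq.ne'⟩
    set Pu : (ZMod q)ˣ := ZMod.unitOfCoprime p hcop with hPu
    set w : ZMod q := (↑(Pu⁻¹) : ZMod q) * (-(a : ZMod q)) with hw
    set res := w.val with hres
    have hreslt : res < q := ZMod.val_lt w
    have hdvd : ∀ n : ℕ, ((q:ℤ) ∣ ((p:ℤ)*n + a)) ↔ n % q = res := by
      intro n
      rw [← ZMod.intCast_zmod_eq_zero_iff_dvd]
      push_cast
      have hPuc : ((Pu : (ZMod q)ˣ) : ZMod q) = (p : ZMod q) := ZMod.coe_unitOfCoprime p hcop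
      constructor
      · intro h
        have h1 : (Pu : ZMod q) * (n : ZMod q) = -(a : ZMod q) := by
          rw [hPuc]; linear_combination h
        have h2 : (n : ZMod q) = w := by
          rw [hw, Units.eq_inv_mul_iff_mul_eq]
          exact h1
        have h3 : (n : ZMod q) = ((res : ℕ) : ZMod q) := by
          rw [h2, hres]; simp
        have h4 : n % q = res % q := (ZMod.natCast_eq_natCast_iff _ _ _).mp h3
        rw [Nat.mod_eq_of_lt hreslt] at h4
        exact h4
      · intro h
        have h3 : (n : ZMod q) = ((res : ℕ) : ZMod q) := by
          rw [ZMod.natCast_eq_natCast_iff]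
          show n % q = res % q
          rw [Nat.mod_eq_of_lt hreslt]
          exact h
        have h2 : (n : ZMod q) = w := by rw [h3, hres]; simp
        rw [h2, hw, ← hPuc]
        calc (Pu : ZMod q) * ((↑(Pu⁻¹) : ZMod q) * (-(a : ZMod q))) + (a : ZMod q)
            = (-(a : ZMod q)) + (a : ZMod q) := by rw [Units.mul_inv_cancel_left]
          _ = 0 := by ring
    -- positivity cutoff
    set N₀ := a.natAbs with hN₀
    have hposN : ∀ n : ℕ, N₀ ≤ n → 0 ≤ (p:ℤ)*n + a := by
      intro n hn
      have h1 : (1:ℤ) ≤ p := by exact_mod_cast hp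
      have h2 : (N₀:ℤ) ≤ n := by exact_mod_cast hn
      have h3 : -a ≤ |a| := (abs_neg a) ▸ le_abs_self (-a)
      have h4 : |a| = (N₀:ℤ) := Int.abs_eq_natAbs a
      have h5 : (n:ℤ) ≤ (p:ℤ)*n := le_mul_of_one_le_left (Int.natCast_nonneg n) h1
      linarith
    have hM : ∀ n : ℕ, N₀ ≤ n → ((∃ m : ℕ, (m:ℝ) = u*n + b) ↔ n % q = res) := by
      intro n hn
      rw [hP2]
      constructor
      · rintro ⟨hd, _⟩; exact (hdvd n).mp hd
      · intro h; exact ⟨(hdvd n).mpr h, hposN n hn⟩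
    rcases Nat.lt_or_ge q 2 with hq2 | hq2
    · left
      have hq1 : q = 1 := by omega
      refine ⟨N₀, fun n hn => ?_⟩
      apply (hM n hn).mpr
      have hres0 : res = 0 := by omega
      rw [hres0, hq1, Nat.mod_one]
    · right; right
      refine ⟨q, res, q*(N₀+1), hq2, hreslt, dvd_mul_right _ _, fun n hn => ?_⟩
      have h1 : N₀ + 1 ≤ q*(N₀+1) := Nat.le_mul_of_pos_left _ hq
      exact hM n (by omega)

lemma mem_gammaSet_iff (α₁ α₂ : ℝ) (hα₁ : 0 < α₁) (hα₂ : 0 < α₂) (β₁ β₂ : ℂ) (n : ℕ) :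
    -((n:ℂ)+β₁)/(α₁:ℂ) ∈ gammaSet α₂ β₂ ↔
      (β₁.im * α₂ = β₂.im * α₁ ∧
       ∃ m : ℕ, (m:ℝ) = (α₂/α₁) * n + (β₁.re * α₂ - β₂.re * α₁)/α₁) := by
  have hα₁c : (α₁:ℂ) ≠ 0 := by exact_mod_cast hα₁.ne'
  have hα₂c : (α₂:ℂ) ≠ 0 := by exact_mod_cast hα₂.ne'
  simp only [gammaSet, Set.mem_setOf_eq]
  constructor
  · rintro ⟨m, hm⟩
    have h : ((n:ℂ)+β₁) * α₂ = ((m:ℂ)+β₂) * α₁ := by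
      rw [div_eq_div_iff hα₁c hα₂c] at hm
      have := hm
      field_simp at this ⊢
      linear_combination -this
    have hre : ((n:ℝ)+β₁.re) * α₂ = ((m:ℝ)+β₂.re) * α₁ := by
      have := congrArg Complex.re h
      simpa using this
    have him : β₁.im * α₂ = β₂.im * α₁ := by
      have := congrArg Complex.im h
      simpa using this
    refine ⟨him, m, ?_⟩
    field_simp
    linarith [hre]
  · rintro ⟨him, m, hm⟩
    refine ⟨m, ?_⟩
    have hre : ((n:ℝ)+β₁.re) * α₂ = ((m:ℝ)+β₂.re) * α₁ := by
      field_simp at hm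
      linarith [hm]
    rw [div_eq_div_iff hα₁c hα₂c]
    apply Complex.ext
    · simp only [Complex.mul_re, Complex.neg_re, Complex.add_re, Complex.natCast_re,
        Complex.ofReal_re, Complex.ofReal_im, Complex.neg_im, Complex.add_im,
        Complex.natCast_im, Complex.mul_im]
      ring_nf
      nlinarith [hre]
    · simp only [Complex.mul_re, Complex.neg_re, Complex.add_re, Complex.natCast_re,
        Complex.ofReal_re, Complex.ofReal_im, Complex.neg_im, Complex.add_im,
        Complex.natCast_im, Complex.mul_im]
      ring_nf
      nlinarith [him]

lemma gamma_elt (α₁ : ℝ) (hα₁ : 0 < α₁) (q : ℕ) (hq : 0 < q) (β₁ : ℂ) (Nj k : ℕ) :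
    -((k:ℂ) + (β₁ + ((Nj:ℕ):ℂ))/(q:ℂ)) / (((α₁/q : ℝ)):ℂ) = -(((Nj + q*k : ℕ):ℂ) + β₁)/(α₁:ℂ) := by
  have hqc : (q:ℂ) ≠ 0 := by exact_mod_cast hq.ne'
  have hac : (α₁:ℂ) ≠ 0 := by exact_mod_cast hα₁.ne'
  push_cast
  field_simp
  ring

/-- **Lemma.** For two γ-sets `W₁`, `W₂`, either `W₁ \ W₂` is finite, or it has strictly
positive density; in the latter case `W₁ \ W₂` is a union of finitely many γ-sets and a
finite set. -/
theorem gammaSet_diff (α₁ α₂ : ℝ) (hα₁ : 0 < α₁) (hα₂ : 0 < α₂) (β₁ β₂ : ℂ) :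
    (gammaSet α₁ β₁ \ gammaSet α₂ β₂).Finite ∨
    ((∃ d : ℝ, 0 < d ∧ HasDensity (gammaSet α₁ β₁ \ gammaSet α₂ β₂) d) ∧
      ∃ (k : ℕ) (αs : Fin k → ℝ) (βs : Fin k → ℂ) (E : Set ℂ),
        (∀ i, 0 < αs i) ∧ E.Finite ∧
        gammaSet α₁ β₁ \ gammaSet α₂ β₂ = (⋃ i, gammaSet (αs i) (βs i)) ∪ E) := by
  classical
  set g : ℕ → ℂ := fun n : ℕ => -((n : ℂ) + β₁) / (α₁ : ℂ) with hgdef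
  set A : Set ℕ := {n : ℕ | -((n:ℂ)+β₁)/(α₁:ℂ) ∉ gammaSet α₂ β₂} with hAdef
  have hS : gammaSet α₁ β₁ \ gammaSet α₂ β₂ = g '' A := by
    ext z
    constructor
    · rintro ⟨⟨n, rfl⟩, hz⟩
      exact ⟨n, hz, rfl⟩
    · rintro ⟨n, hn, rfl⟩
      exact ⟨⟨n, rfl⟩, hn⟩
  have hstruct : (∃ N : ℕ, ∀ n, N ≤ n → -((n:ℂ)+β₁)/(α₁:ℂ) ∈ gammaSet α₂ β₂) ∨
      (∃ N : ℕ, ∀ n : ℕ, -((n:ℂ)+β₁)/(α₁:ℂ) ∈ gammaSet α₂ β₂ → n < N) ∨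
      (∃ q res N : ℕ, 2 ≤ q ∧ res < q ∧ q ∣ N ∧
        ∀ n, N ≤ n → (-((n:ℂ)+β₁)/(α₁:ℂ) ∈ gammaSet α₂ β₂ ↔ n % q = res)) := by
    by_cases him : β₁.im * α₂ = β₂.im * α₁
    · rcases P_structure (α₂/α₁) ((β₁.re * α₂ - β₂.re * α₁)/α₁) (div_pos hα₂ hα₁) with
        ⟨N, hN⟩ | ⟨N, hN⟩ | ⟨q, res, N, hq2, hres, hqN, hN⟩
      · exact Or.inl ⟨N, fun n hn =>
          (mem_gammaSet_iff α₁ α₂ hα₁ hα₂ β₁ β₂ n).mpr ⟨him, hN n hn⟩⟩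
      · exact Or.inr (Or.inl ⟨N, fun n hn =>
          hN n ((mem_gammaSet_iff α₁ α₂ hα₁ hα₂ β₁ β₂ n).mp hn).2⟩)
      · refine Or.inr (Or.inr ⟨q, res, N, hq2, hres, hqN, fun n hn => ?_⟩)
        rw [mem_gammaSet_iff α₁ α₂ hα₁ hα₂ β₁ β₂ n, ← hN n hn]
        exact ⟨fun h => h.2, fun h => ⟨him, h⟩⟩
    · exact Or.inr (Or.inl ⟨0, fun n hn =>
        absurd ((mem_gammaSet_iff α₁ α₂ hα₁ hα₂ β₁ β₂ n).mp hn).1 him⟩)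
  rcases hstruct with ⟨N, hco⟩ | ⟨N, hbd⟩ | ⟨q, res, N, hq2, hres, hqN, hM⟩
  · -- cofinite: difference is finite
    left
    apply ((Set.finite_Iio N).image g).subset
    rw [hS]
    rintro z ⟨n, hn, rfl⟩
    refine ⟨n, ?_, rfl⟩
    by_contra h
    rw [Set.mem_Iio, not_lt] at h
    exact hn (hco n h)
  · -- W₁ ∩ W₂ bounded: one γ-set plus finite
    right
    have hbd' : ∀ n, N ≤ n → n ∈ A := fun n hn hmem => absurd (hbd n hmem) (by omega)
    constructor
    · refine ⟨1 * α₁, by linarith, ?_⟩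
      rw [hS]
      apply hasDensity_image α₁ hα₁ β₁ A 1 N (by norm_num)
      intro K
      have h1 := cnt_perturb (A := A) (A' := (Set.univ : Set ℕ)) (N₀ := N)
        (fun n hn => ⟨fun _ => trivial, fun _ => hbd' n hn⟩) K
      rw [Set.univ_inter, iio_ncard] at h1
      simpa [one_mul] using h1
    · refine ⟨1, fun _ => α₁, fun _ => β₁ + (N:ℂ), g '' (A ∩ Set.Iio N), fun _ => hα₁,
        (inter_iio_finite A N).image g, ?_⟩
      rw [hS]
      ext z
      simp only [Set.mem_union, Set.mem_iUnion, Set.mem_image, gammaSet, Set.mem_setOf_eq]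
      constructor
      · rintro ⟨n, hn, rfl⟩
        rcases lt_or_ge n N with h | h
        · exact Or.inr ⟨n, ⟨hn, h⟩, rfl⟩
        · refine Or.inl ⟨0, n - N, ?_⟩
          rw [hgdef]
          simp only
          rw [Nat.cast_sub h]
          push_cast
          ring_nf
      · rintro (⟨i, m, hm⟩ | ⟨n, ⟨hn, _⟩, rfl⟩)
        · refine ⟨m + N, hbd' (m + N) (by omega), ?_⟩
          rw [hm, hgdef]
          push_cast
          ring_nf
        · exact ⟨n, hn, rfl⟩
  · -- periodic case: q-1 γ-sets plus finite
    have hq : 0 < q := by omega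
    have hA' : ∀ n, N ≤ n → (n ∈ A ↔ n % q ≠ res) := by
      intro n hn
      constructor
      · intro h hmod
        exact h ((hM n hn).mpr hmod)
      · intro h hmem
        exact h ((hM n hn).mp hmem)
    have hqR : (0:ℝ) < q := by exact_mod_cast hq
    have hρ : (0:ℝ) < 1 - 1/q := by
      have : (1:ℝ)/q < 1 := by
        rw [div_lt_one hqR]
        exact_mod_cast hq2
      linarith
    right
    constructor
    · refine ⟨(1 - 1/q) * α₁, by positivity, ?_⟩
      rw [hS]
      apply hasDensity_image α₁ hα₁ β₁ A (1 - 1/q) ((N:ℝ) + (res + 1)) (by linarith)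
      intro K
      have h1 := cnt_perturb (A := A) (A' := {n : ℕ | n % q ≠ res}) (N₀ := N) hA' K
      have h2 := cnt_mod q res hq hres K
      have := abs_sub_le ((A ∩ Set.Iio K).ncard : ℝ)
        (({n : ℕ | n % q ≠ res} ∩ Set.Iio K).ncard : ℝ) ((1 - 1/q) * K)
      linarith
    · -- the decomposition
      set σ : Fin (q-1) → ℕ := fun i => if (i:ℕ) < res then (i:ℕ) else (i:ℕ)+1 with hσdef
      have hσlt : ∀ i, σ i < q := by
        intro i
        have := i.isLt
        simp only [hσdef]
        split_ifs <;> omega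
      have hσne : ∀ i, σ i ≠ res := by
        intro i
        have := i.isLt
        simp only [hσdef]
        split_ifs <;> omega
      have hσsurj : ∀ j, j < q → j ≠ res → ∃ i : Fin (q-1), σ i = j := by
        intro j hj hne
        rcases lt_or_ge j res with h | h
        · exact ⟨⟨j, by omega⟩, by simp [hσdef, h]⟩
        · have hj' : res < j := by omega
          refine ⟨⟨j - 1, by omega⟩, ?_⟩
          simp only [hσdef]
          rw [if_neg (by omega)]
          omega
      refine ⟨q - 1, fun _ => α₁/q, fun i => (β₁ + ((N + σ i : ℕ):ℂ))/(q:ℂ),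
        g '' (A ∩ Set.Iio N), fun _ => by positivity, (inter_iio_finite A N).image g, ?_⟩
      rw [hS]
      ext z
      simp only [Set.mem_union, Set.mem_iUnion, Set.mem_image, gammaSet, Set.mem_setOf_eq]
      constructor
      · rintro ⟨n, hn, rfl⟩
        rcases lt_or_ge n N with h | h
        · exact Or.inr ⟨n, ⟨hn, h⟩, rfl⟩
        · have hmodne : n % q ≠ res := (hA' n h).mp hn
          obtain ⟨i, hi⟩ := hσsurj (n % q) (Nat.mod_lt n hq) hmodne
          have hmod : (n - N) % q = n % q := by
            have h1 : n - N ≡ n [MOD q] := by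
              apply (Nat.modEq_iff_dvd' (Nat.sub_le n N)).mpr
              have : n - (n - N) = N := by omega
              rw [this]
              exact hqN
            exact h1
          set k := (n - N) / q with hk
          have hdecomp : n = (N + σ i) + q * k := by
            have h1 := Nat.div_add_mod (n - N) q
            rw [hmod] at h1
            rw [hi, hk]
            omega
          refine Or.inl ⟨i, k, ?_⟩
          rw [hgdef]
          simp only
          rw [gamma_elt α₁ hα₁ q hq β₁ (N + σ i) k, ← hdecomp]
      · rintro (⟨i, m, hm⟩ | ⟨n, ⟨hn, _⟩, rfl⟩)
        · set n := (N + σ i) + q * m with hn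
          refine ⟨n, ?_, ?_⟩
          · apply (hA' n (by omega)).mpr
            have h1 : n % q = σ i := by
              have h2 : n ≡ σ i [MOD q] := by
                have : (q:ℕ) ∣ n - σ i := by
                  have : n - σ i = N + q * m := by omega
                  rw [this]
                  exact Dvd.dvd.add hqN (dvd_mul_right q m)
                exact ((Nat.modEq_iff_dvd' (by omega)).mpr this).symm
              have h3 : n % q = σ i % q := h2
              rw [Nat.mod_eq_of_lt (hσlt i)] at h3
              exact h3
            rw [h1]
            exact hσne i
          · rw [hm, hgdef]
            simp only
            rw [gamma_elt α₁ hα₁ q hq β₁ (N + σ i) m]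
        · exact ⟨n, hn, rfl⟩
end

section
/- Let V_1 = ∑_{i=1}^{r} W_i^1 and V_2 = ∑_{j=1}^{s} W_j^2 be finite sums of γ-sets, viewed as multisets (an element occurring in k of the sets is counted k times). Then either the multiset difference V_1 \ V_2 is finite, or its density D(V_1 \ V_2) is strictly positive; in the latter case V_1 \ V_2 is a union of γ-sets and a finite set. -/
open Filter Topology

noncomputable section

/-- The multiplicity function of the multiset sum `∑_i W_i` of the γ-sets
`W_i = γ(α_i, β_i)`: an element occurring in `k` of the sets is counted `k` times. -/
def gammaMult {r : ℕ} (α : Fin r → ℝ) (β : Fin r → ℂ) (z : ℂ) : ℕ :=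
  ∑ i : Fin r, Set.indicator (gammaSet (α i) (β i)) (fun _ => 1) z

/-- The counting function (with multiplicity) `N(T) = ∑_{Re z > −T} m(z)` of a multiset of
complex numbers given by its multiplicity function `m`. -/
def multCount (m : ℂ → ℕ) (T : ℝ) : ℝ :=
  ∑ᶠ z ∈ {z : ℂ | -T < z.re}, (m z : ℝ)

/-- A multiset of complex numbers (given by its multiplicity function) has density `d` if
`N(T)/T → d` as `T → ∞`. -/
def HasMultDensity (m : ℂ → ℕ) (d : ℝ) : Prop :=
  Tendsto (fun T : ℝ => multCount m T / T) atTop (𝓝 d)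

end

noncomputable section Aux

open Function Set

/-- A single point of a γ-progression, with integer index. -/
def gpt (α : ℝ) (β : ℂ) (m : ℤ) : ℂ := -((m : ℂ) + β) / (α : ℂ)

lemma gpt_injective {α : ℝ} (hα : α ≠ 0) (β : ℂ) : Function.Injective (gpt α β) := by
  intro m n h
  have hαC : (α : ℂ) ≠ 0 := by exact_mod_cast hα
  simp only [gpt] at h
  rw [div_left_inj' hαC, neg_inj, add_left_inj] at h
  norm_cast at h

lemma gammaSet_eq (α : ℝ) (β : ℂ) : gammaSet α β = {z | ∃ n : ℕ, z = gpt α β n} := by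
  ext z
  simp only [gammaSet, Set.mem_setOf_eq, gpt]
  constructor
  · rintro ⟨n, rfl⟩; exact ⟨n, by push_cast; ring_nf⟩
  · rintro ⟨n, rfl⟩; exact ⟨n, by push_cast; ring_nf⟩

lemma mem_gammaSet_iff_s5 {α : ℝ} {β : ℂ} {z : ℂ} : z ∈ gammaSet α β ↔ ∃ n : ℕ, z = gpt α β n := by
  rw [gammaSet_eq]; rfl

/-- the indicator function of a single γ-set -/
def gInd (α : ℝ) (β : ℂ) (z : ℂ) : ℕ := Set.indicator (gammaSet α β) (fun _ => 1) z

lemma gInd_apply_mem {α : ℝ} {β : ℂ} {z : ℂ} (h : z ∈ gammaSet α β) : gInd α β z = 1 := by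
  simp [gInd, h]

lemma gInd_apply_not_mem {α : ℝ} {β : ℂ} {z : ℂ} (h : z ∉ gammaSet α β) : gInd α β z = 0 := by
  simp [gInd, h]

lemma gInd_le_one (α : ℝ) (β : ℂ) (z : ℂ) : gInd α β z ≤ 1 := by
  by_cases h : z ∈ gammaSet α β
  · rw [gInd_apply_mem h]
  · rw [gInd_apply_not_mem h]; exact Nat.zero_le _

/-- multiplicity function of a list of γ-sets -/
def lMult (l : List (ℝ × ℂ)) (z : ℂ) : ℕ := (l.map fun p => gInd p.1 p.2 z).sum

@[simp] lemma lMult_nil (z : ℂ) : lMult [] z = 0 := rfl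

@[simp] lemma lMult_cons (p : ℝ × ℂ) (l : List (ℝ × ℂ)) (z : ℂ) :
    lMult (p :: l) z = gInd p.1 p.2 z + lMult l z := by
  simp [lMult]

@[simp] lemma lMult_append (l₁ l₂ : List (ℝ × ℂ)) (z : ℂ) :
    lMult (l₁ ++ l₂) z = lMult l₁ z + lMult l₂ z := by
  simp [lMult]

lemma lMult_perm {l₁ l₂ : List (ℝ × ℂ)} (h : l₁.Perm l₂) (z : ℂ) :
    lMult l₁ z = lMult l₂ z := by
  exact List.Perm.sum_eq (h.map _)

lemma gammaMult_eq_lMult {r : ℕ} (α : Fin r → ℝ) (β : Fin r → ℂ) (z : ℂ) :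
    gammaMult α β z = lMult (List.ofFn fun i => (α i, β i)) z := by
  induction r with
  | zero => simp [gammaMult, lMult]
  | succ n ih =>
      rw [List.ofFn_succ]
      rw [lMult_cons]
      rw [gammaMult, Fin.sum_univ_succ]
      congr 1
      exact ih (fun i => α i.succ) (fun i => β i.succ) 

lemma lMult_eq_gammaMult (l : List (ℝ × ℂ)) (z : ℂ) :
    lMult l z = gammaMult (fun i : Fin l.length => (l.get i).1) (fun i => (l.get i).2) z := by
  rw [gammaMult_eq_lMult]
  congr 1
  exact (List.ofFn_get l).symm

end Aux

noncomputable section Density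

open Function Set

lemma gpt_re {α : ℝ} (hα : 0 < α) (β : ℂ) (m : ℤ) :
    (gpt α β m).re = -((m : ℝ) + β.re) / α := by
  simp [gpt, Complex.div_ofReal_re]

/-- points of a γ-set in the half plane `re > -T` -/
lemma gammaSet_inter_halfplane {α : ℝ} (hα : 0 < α) (β : ℂ) (T : ℝ) :
    gammaSet α β ∩ {z | -T < z.re} = (fun n : ℕ => gpt α β n) '' ↑(Finset.range ⌈α * T - β.re⌉₊) := by
  ext z
  simp only [Set.mem_inter_iff, mem_gammaSet_iff_s5, Set.mem_setOf_eq, Set.mem_image,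
    Finset.coe_range, Set.mem_Iio]
  constructor
  · rintro ⟨⟨n, rfl⟩, hre⟩
    refine ⟨n, ?_, rfl⟩
    rw [gpt_re hα] at hre
    rw [Nat.lt_ceil]
    push_cast at hre ⊢
    have h1 : ((n : ℝ) + β.re) / α < T := by
      rw [neg_div] at hre; linarith
    have h2 := (div_lt_iff₀ hα).mp h1
    linarith
  · rintro ⟨n, hn, rfl⟩
    refine ⟨⟨n, rfl⟩, ?_⟩
    rw [gpt_re hα]
    rw [Nat.lt_ceil] at hn
    push_cast
    rw [neg_div, neg_lt_neg_iff, div_lt_iff₀ hα]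
    nlinarith

lemma gammaSet_halfplane_finite {α : ℝ} (hα : 0 < α) (β : ℂ) (T : ℝ) :
    (gammaSet α β ∩ {z | -T < z.re}).Finite := by
  rw [gammaSet_inter_halfplane hα]
  exact (Finset.range _).finite_toSet.image _

lemma gammaSet_halfplane_ncard {α : ℝ} (hα : 0 < α) (β : ℂ) (T : ℝ) :
    (gammaSet α β ∩ {z | -T < z.re}).ncard = ⌈α * T - β.re⌉₊ := by
  rw [gammaSet_inter_halfplane hα]
  have hinj : Function.Injective (fun n : ℕ => gpt α β n) := by
    intro a b h
    exact_mod_cast gpt_injective hα.ne' β h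
  rw [Set.ncard_image_of_injective _ hinj, Set.ncard_coe_finset, Finset.card_range]

lemma multCount_gInd {α : ℝ} (hα : 0 < α) (β : ℂ) (T : ℝ) :
    multCount (gInd α β) T = (⌈α * T - β.re⌉₊ : ℝ) := by
  unfold multCount
  have hsupp : {z : ℂ | -T < z.re} ∩ Function.support (fun z => ((gInd α β z : ℕ) : ℝ)) ⊆
      gammaSet α β ∩ {z | -T < z.re} := by
    rintro z ⟨hz1, hz2⟩
    refine ⟨?_, hz1⟩
    by_contra h
    exact hz2 (by simp [gInd_apply_not_mem h])
  have hfin : ({z : ℂ | -T < z.re} ∩ Function.support (fun z => ((gInd α β z : ℕ) : ℝ))).Finite :=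
    (gammaSet_halfplane_finite hα β T).subset hsupp
  rw [finsum_mem_eq_sum _ hfin]
  have : ∀ z ∈ hfin.toFinset, ((gInd α β z : ℕ) : ℝ) = 1 := by
    intro z hz
    rw [Set.Finite.mem_toFinset] at hz
    have := hsupp hz
    simp [gInd_apply_mem this.1]
  rw [Finset.sum_congr rfl this, Finset.sum_const, nsmul_eq_mul, mul_one]
  congr 1
  have hEq : {z : ℂ | -T < z.re} ∩ Function.support (fun z => ((gInd α β z : ℕ) : ℝ)) =
      gammaSet α β ∩ {z | -T < z.re} := by
    apply Set.Subset.antisymm hsupp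
    rintro z ⟨h1, h2⟩
    exact ⟨h2, by simp [Function.support, gInd_apply_mem h1]⟩
  rw [← gammaSet_halfplane_ncard hα β T, Set.ncard_eq_toFinset_card _ ((gammaSet_halfplane_finite hα β T))]
  congr 1
  ext z
  simp only [Set.Finite.mem_toFinset]
  rw [← hEq]

lemma multCount_add (m₁ m₂ : ℂ → ℕ) (T : ℝ)
    (h1 : ({z : ℂ | -T < z.re} ∩ Function.support fun z => ((m₁ z : ℕ) : ℝ)).Finite)
    (h2 : ({z : ℂ | -T < z.re} ∩ Function.support fun z => ((m₂ z : ℕ) : ℝ)).Finite) :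
    multCount (fun z => m₁ z + m₂ z) T = multCount m₁ T + multCount m₂ T := by
  unfold multCount
  push_cast
  exact finsum_mem_add_distrib' h1 h2

end Density

noncomputable section Density2

open Function Set

lemma support_sum_subset {ι : Type*} (s : Finset ι) (F : ι → ℂ → ℕ) :
    (Function.support fun z => ((∑ i ∈ s, F i z : ℕ) : ℝ)) ⊆
      ⋃ i ∈ s, Function.support fun z => ((F i z : ℕ) : ℝ) := by
  intro z hz
  simp only [Function.mem_support, ne_eq, Nat.cast_eq_zero] at hz
  have : ∃ i ∈ s, F i z ≠ 0 := by
    by_contra h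
    push_neg at h
    exact hz (Finset.sum_eq_zero h)
  obtain ⟨i, hi, hne⟩ := this
  exact Set.mem_biUnion hi (by simp [Function.mem_support, hne])

lemma multCount_finsum {ι : Type*} (s : Finset ι) (F : ι → ℂ → ℕ) (T : ℝ)
    (hF : ∀ i ∈ s, ({z : ℂ | -T < z.re} ∩ Function.support fun z => ((F i z : ℕ) : ℝ)).Finite) :
    multCount (fun z => ∑ i ∈ s, F i z) T = ∑ i ∈ s, multCount (F i) T := by
  classical
  induction s using Finset.induction_on with
  | empty => simp [multCount]
  | insert a s hnotmem ih =>
      have hFa := hF a (Finset.mem_insert_self a s)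
      have hFs : ∀ i ∈ s, ({z : ℂ | -T < z.re} ∩ Function.support fun z => ((F i z : ℕ) : ℝ)).Finite :=
        fun i hi => hF i (Finset.mem_insert_of_mem hi)
      have hsumfin : ({z : ℂ | -T < z.re} ∩ Function.support fun z => ((∑ i ∈ s, F i z : ℕ) : ℝ)).Finite := by
        apply Set.Finite.subset (Set.Finite.biUnion s.finite_toSet hFs)
        intro z hz
        obtain ⟨h1, h2⟩ := hz
        have := support_sum_subset s F h2
        simp only [Set.mem_iUnion] at this ⊢
        obtain ⟨i, hi, hmem⟩ := this
        exact ⟨i, hi, h1, hmem⟩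
      have : (fun z => ∑ i ∈ insert a s, F i z) = fun z => F a z + ∑ i ∈ s, F i z := by
        funext z; rw [Finset.sum_insert hnotmem]
      rw [this, multCount_add _ _ T hFa hsumfin, ih hFs, Finset.sum_insert hnotmem]

lemma multCount_fin_nonneg (e : ℂ → ℕ) (T : ℝ) (he : (Function.support e).Finite) :
    0 ≤ multCount e T ∧ multCount e T ≤ ∑ z ∈ he.toFinset, (e z : ℝ) := by
  have hsupp : Function.support (fun z => ((e z : ℕ) : ℝ)) = Function.support e := by
    ext z; simp [Function.mem_support]
  have hfin : ({z : ℂ | -T < z.re} ∩ Function.support fun z => ((e z : ℕ) : ℝ)).Finite := by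
    rw [hsupp]; exact he.inter_of_right _
  unfold multCount
  rw [finsum_mem_eq_sum _ hfin]
  constructor
  · exact Finset.sum_nonneg fun z _ => by positivity
  · apply Finset.sum_le_sum_of_subset_of_nonneg
    · intro z hz
      simp only [Set.Finite.mem_toFinset] at hz ⊢
      rw [hsupp] at hz
      exact hz.2
    · intro z _ _; positivity

lemma tendsto_ceil_div (α : ℝ) (hα : 0 < α) (b : ℝ) :
    Tendsto (fun T : ℝ => (⌈α * T - b⌉₊ : ℝ) / T) atTop (𝓝 α) := by
  have hev : ∀ᶠ T in atTop, 0 ≤ α * T - b := by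
    filter_upwards [eventually_ge_atTop ((b + 1)/α)] with T hT
    have : b + 1 ≤ α * T := by
      rw [div_le_iff₀ hα] at hT
      linarith
    linarith
  have hlow : ∀ᶠ T in atTop, (α * T - b) / T ≤ (⌈α * T - b⌉₊ : ℝ) / T := by
    filter_upwards [hev, eventually_gt_atTop 0] with T h1 h2
    exact div_le_div_of_nonneg_right (Nat.le_ceil _) h2.le |>.trans_eq rfl
  have hhigh : ∀ᶠ T in atTop, (⌈α * T - b⌉₊ : ℝ) / T ≤ (α * T - b + 1) / T := by
    filter_upwards [hev, eventually_gt_atTop 0] with T h1 h2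
    apply div_le_div_of_nonneg_right _ h2.le |>.trans_eq rfl
    exact (Nat.ceil_lt_add_one h1).le
  have t1 : Tendsto (fun T : ℝ => (α * T - b) / T) atTop (𝓝 α) := by
    have : ∀ᶠ T in atTop, (α * T - b) / T = α - b / T := by
      filter_upwards [eventually_ne_atTop 0] with T hT
      field_simp
    rw [tendsto_congr' this]
    have hb : Tendsto (fun T : ℝ => b / T) atTop (𝓝 0) :=
      (tendsto_const_nhds (x := b)).div_atTop tendsto_id
    have := (tendsto_const_nhds (x := α)).sub hb
    simpa using this
  have t2 : Tendsto (fun T : ℝ => (α * T - b + 1) / T) atTop (𝓝 α) := by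
    have : ∀ᶠ T in atTop, (α * T - b + 1) / T = α - (b - 1) / T := by
      filter_upwards [eventually_ne_atTop 0] with T hT
      field_simp
      ring
    rw [tendsto_congr' this]
    have hb : Tendsto (fun T : ℝ => (b - 1) / T) atTop (𝓝 0) :=
      (tendsto_const_nhds (x := b - 1)).div_atTop tendsto_id
    have := (tendsto_const_nhds (x := α)).sub hb
    simpa using this
  exact tendsto_of_tendsto_of_tendsto_of_le_of_le' t1 t2 hlow hhigh

lemma hasMultDensity_decomp {k : ℕ} (αs : Fin k → ℝ) (βs : Fin k → ℂ) (e : ℂ → ℕ)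
    (hpos : ∀ i, 0 < αs i) (he : (Function.support e).Finite) (m : ℂ → ℕ)
    (hm : ∀ z, m z = gammaMult αs βs z + e z) :
    HasMultDensity m (∑ i, αs i) := by
  classical
  have hfinInd : ∀ (i : Fin k) (T : ℝ),
      ({z : ℂ | -T < z.re} ∩ Function.support fun z => ((gInd (αs i) (βs i) z : ℕ) : ℝ)).Finite := by
    intro i T
    apply (gammaSet_halfplane_finite (hpos i) (βs i) T).subset
    rintro z ⟨h1, h2⟩
    refine ⟨?_, h1⟩
    by_contra h
    exact h2 (by simp [gInd_apply_not_mem h])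
  have hfinE : ∀ T : ℝ, ({z : ℂ | -T < z.re} ∩ Function.support fun z => ((e z : ℕ) : ℝ)).Finite := by
    intro T
    apply Set.Finite.subset (he.inter_of_right _)
    rintro z ⟨h1, h2⟩
    refine ⟨h1, ?_⟩
    simp only [Function.mem_support, ne_eq, Nat.cast_eq_zero] at h2
    exact h2
  have key : ∀ T : ℝ, multCount m T = ∑ i, multCount (gInd (αs i) (βs i)) T + multCount e T := by
    intro T
    have h1 : (fun z => m z) = fun z => (∑ i, gInd (αs i) (βs i) z) + e z := by
      funext z; rw [hm z]; rfl
    have hgfin : ({z : ℂ | -T < z.re} ∩ Function.support fun z =>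
        ((∑ i, gInd (αs i) (βs i) z : ℕ) : ℝ)).Finite := by
      apply Set.Finite.subset (Set.Finite.biUnion (Finset.univ : Finset (Fin k)).finite_toSet
        (fun i _ => hfinInd i T))
      rintro z ⟨hz1, hz2⟩
      have := support_sum_subset Finset.univ (fun i => gInd (αs i) (βs i)) hz2
      simp only [Set.mem_iUnion] at this ⊢
      obtain ⟨i, hi, hmem⟩ := this
      exact ⟨i, hi, hz1, hmem⟩
    show multCount m T = _
    rw [show m = fun z => (∑ i, gInd (αs i) (βs i) z) + e z from h1]
    rw [multCount_add _ _ T hgfin (hfinE T)]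
    rw [multCount_finsum Finset.univ _ T (fun i _ => hfinInd i T)]
  unfold HasMultDensity
  have : (fun T => multCount m T / T) =
      fun T => (∑ i, multCount (gInd (αs i) (βs i)) T / T) + multCount e T / T := by
    funext T
    rw [key T, add_div, Finset.sum_div]
  rw [this]
  have h2 : Tendsto (fun T => multCount e T / T) atTop (𝓝 0) := by
    set K := ∑ z ∈ he.toFinset, (e z : ℝ)
    apply tendsto_of_tendsto_of_tendsto_of_le_of_le' (tendsto_const_nhds (x := (0:ℝ)))
      ((tendsto_const_nhds (x := K)).div_atTop tendsto_id)
    · filter_upwards [eventually_gt_atTop (0:ℝ)] with T hT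
      exact div_nonneg (multCount_fin_nonneg e T he).1 hT.le
    · filter_upwards [eventually_gt_atTop (0:ℝ)] with T hT
      exact div_le_div_of_nonneg_right ((multCount_fin_nonneg e T he).2) hT.le |>.trans_eq rfl
  have h1 : Tendsto (fun T => ∑ i, multCount (gInd (αs i) (βs i)) T / T) atTop (𝓝 (∑ i, αs i)) := by
    apply tendsto_finset_sum
    intro i _
    have : (fun T => multCount (gInd (αs i) (βs i)) T / T) =
        fun T => (⌈αs i * T - (βs i).re⌉₊ : ℝ) / T := by
      funext T; rw [multCount_gInd (hpos i)]
    rw [this]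
    exact tendsto_ceil_div _ (hpos i) _
  simpa using h1.add h2

end Density2

noncomputable section Grid

open Function Set

/-- The rational grid spanned by a γ-set. -/
def grid (α : ℝ) (β : ℂ) : Set ℂ := {z | ∃ q : ℚ, z = (-β + (q : ℂ)) / (α : ℂ)}

lemma grid_two_points {α α' : ℝ} {β β' : ℂ} (hα : α ≠ 0) (hα' : α' ≠ 0)
    {m₁ m₂ : ℤ} (hne : m₁ ≠ m₂)
    (h₁ : gpt α' β' m₁ ∈ grid α β) (h₂ : gpt α' β' m₂ ∈ grid α β) :
    ∀ m : ℤ, gpt α' β' m ∈ grid α β := by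
  obtain ⟨q₁, hq₁⟩ := h₁
  obtain ⟨q₂, hq₂⟩ := h₂
  intro m
  have haC : (α : ℂ) ≠ 0 := by exact_mod_cast hα
  have haC' : (α' : ℂ) ≠ 0 := by exact_mod_cast hα'
  have hNQ : ((m₂ - m₁ : ℚ)) ≠ 0 := by
    have : ((m₂ : ℚ)) ≠ (m₁ : ℚ) := by exact_mod_cast hne.symm
    exact sub_ne_zero.mpr this
  refine ⟨q₁ + ((m₁ - m : ℚ)) * (q₁ - q₂) / ((m₂ - m₁ : ℚ)), ?_⟩
  have hNC : ((m₂ : ℂ) - m₁) ≠ 0 := by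
    have : ((m₂ : ℂ)) ≠ (m₁ : ℂ) := by exact_mod_cast hne.symm
    exact sub_ne_zero.mpr this
  simp only [gpt] at hq₁ hq₂ ⊢
  push_cast
  field_simp at hq₁ hq₂ ⊢
  linear_combination ((m₂ : ℂ) - m₁) * hq₁ + ((m₁ : ℂ) - m) * (hq₁ - hq₂)

lemma grid_subset_of_two {α α' : ℝ} {β β' : ℂ} (hα : α ≠ 0) (hα' : α' ≠ 0)
    {z₁ z₂ : ℂ} (hne : z₁ ≠ z₂)
    (h₁ : z₁ ∈ gammaSet α' β' ∩ grid α β) (h₂ : z₂ ∈ gammaSet α' β' ∩ grid α β) :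
    gammaSet α' β' ⊆ grid α β := by
  obtain ⟨hz₁, hg₁⟩ := h₁
  obtain ⟨hz₂, hg₂⟩ := h₂
  rw [mem_gammaSet_iff_s5] at hz₁ hz₂
  obtain ⟨n₁, rfl⟩ := hz₁
  obtain ⟨n₂, rfl⟩ := hz₂
  have hne' : (n₁ : ℤ) ≠ (n₂ : ℤ) := fun h => hne (by rw [h])
  intro z hz
  rw [mem_gammaSet_iff_s5] at hz
  obtain ⟨n, rfl⟩ := hz
  exact grid_two_points hα hα' hne' hg₁ hg₂ n

lemma grid_data {α α' : ℝ} {β β' : ℂ} (hα : 0 < α) (hα' : 0 < α')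
    (h : gammaSet α' β' ⊆ grid α β) :
    ∃ q q₀ : ℚ, 0 < q ∧ (1 : ℂ) / (α' : ℂ) = (q : ℂ) / (α : ℂ) ∧
      -β' / (α' : ℂ) = (-β + (q₀ : ℂ)) / (α : ℂ) := by
  have haC : (α : ℂ) ≠ 0 := by exact_mod_cast hα.ne'
  have haC' : (α' : ℂ) ≠ 0 := by exact_mod_cast hα'.ne'
  have h0 : gpt α' β' 0 ∈ grid α β := h (mem_gammaSet_iff_s5.mpr ⟨0, by norm_num⟩)
  have h1 : gpt α' β' 1 ∈ grid α β := h (mem_gammaSet_iff_s5.mpr ⟨1, by norm_num⟩)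
  obtain ⟨q₀, hq₀⟩ := h0
  obtain ⟨q₁, hq₁⟩ := h1
  unfold gpt at hq₀ hq₁
  refine ⟨q₀ - q₁, q₀, ?_, ?_, ?_⟩
  · -- positivity via real parts
    have hsub : (1 : ℂ) / (α' : ℂ) = ((q₀ - q₁ : ℚ) : ℂ) / (α : ℂ) := by
      field_simp at hq₀ hq₁ ⊢
      push_cast
      linear_combination hq₀ - hq₁
    have hreal : (1 / α' : ℝ) = ((q₀ - q₁ : ℚ) : ℝ) / α := by
      exact_mod_cast hsub
    have : (0 : ℝ) < ((q₀ - q₁ : ℚ) : ℝ) / α := by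
      rw [← hreal]
      positivity
    have : (0 : ℝ) < ((q₀ - q₁ : ℚ) : ℝ) := by
      by_contra hc
      push_neg at hc
      nlinarith [div_nonpos_of_nonpos_of_nonneg hc hα.le]
    exact_mod_cast this
  · field_simp at hq₀ hq₁ ⊢
    push_cast
    linear_combination hq₀ - hq₁
  · simpa using hq₀

lemma int_of_den_dvd {q : ℚ} {Q : ℕ} (h : (q.den : ℕ) ∣ Q) : ∃ a : ℤ, (a : ℚ) = q * Q := by
  obtain ⟨t, ht⟩ := h
  refine ⟨q.num * t, ?_⟩
  push_cast
  rw [ht]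
  push_cast
  rw [← Rat.mul_den_eq_num]
  ring

end Grid

noncomputable section Comb

open Function Set

lemma ap_mem_iff {c : ℕ} (hc : 0 < c) (eI m : ℤ) :
    (∃ n : ℕ, m = (n : ℤ) * c + eI) ↔ eI ≤ m ∧ (c : ℤ) ∣ (m - eI) := by
  constructor
  · rintro ⟨n, rfl⟩
    have hnn : (0 : ℤ) ≤ (n : ℤ) * c := by positivity
    exact ⟨by linarith, ⟨n, by ring⟩⟩
  · rintro ⟨h1, t, ht⟩
    have hc' : (0 : ℤ) < (c : ℤ) := by exact_mod_cast hc
    have htn : 0 ≤ t := by nlinarith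
    refine ⟨t.toNat, ?_⟩
    rw [Int.toNat_of_nonneg htn]
    linarith [ht]

lemma per_ext (F : ℤ → ℕ) (M : ℤ) (P : ℕ) (hP : 0 < P)
    (hper : ∀ m, M ≤ m → F (m + P) = F m) :
    ∀ m, M ≤ m → F m = F (M + (m - M) % P) := by
  have hPZ : (0 : ℤ) < (P : ℤ) := by exact_mod_cast hP
  have key : ∀ n : ℕ, F (M + n) = F (M + (n : ℤ) % P) := by
    intro n
    induction n using Nat.strong_induction_on with
    | _ n ih =>
      by_cases h : n < P
      · rw [Int.emod_eq_of_lt (by positivity) (by exact_mod_cast h)]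
      · push_neg at h
        have h1 : (M + (n - P : ℕ) : ℤ) + P = M + n := by
          push_cast [Nat.cast_sub h]
          ring
        have h2 : F (M + (n - P : ℕ)) = F (M + ((n - P : ℕ) : ℤ) % P) :=
          ih (n - P) (by omega)
        have h3 : (((n - P : ℕ) : ℤ)) % P = (n : ℤ) % P := by
          rw [Nat.cast_sub h, Int.sub_emod, Int.emod_self, sub_zero, Int.emod_emod_of_dvd _ dvd_rfl]
        rw [← h1, hper _ (le_add_of_nonneg_right (Int.natCast_nonneg _)), h2, h3]
  intro m hm
  have : m = M + ((m - M).toNat : ℤ) := by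
    rw [Int.toNat_of_nonneg (by linarith)]
    ring
  rw [this, key]
  congr 2
  rw [Int.toNat_of_nonneg (by linarith)]
  ring_nf

lemma list_bound_above (lst : List ℤ) : ∃ M : ℤ, 0 ≤ M ∧ ∀ x ∈ lst, x ≤ M := by
  induction lst with
  | nil => exact ⟨0, le_refl _, by simp⟩
  | cons a t ih =>
      obtain ⟨M, hM0, hM⟩ := ih
      exact ⟨max a M, le_trans hM0 (le_max_right _ _), by
        intro x hx
        rcases List.mem_cons.mp hx with rfl | hx
        · exact le_max_left _ _
        · exact le_trans (hM x hx) (le_max_right _ _)⟩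

lemma list_bound_below (lst : List ℤ) : ∃ L : ℤ, L ≤ 0 ∧ ∀ x ∈ lst, L ≤ x := by
  obtain ⟨M, hM0, hM⟩ := list_bound_above (lst.map (fun x => -x))
  refine ⟨-M, by linarith, fun x hx => ?_⟩
  have := hM (-x) (List.mem_map.mpr ⟨x, hx, rfl⟩)
  linarith

lemma lMult_flatMap {γ : Type*} (lst : List γ) (f : γ → List (ℝ × ℂ)) (z : ℂ) :
    lMult (lst.flatMap f) z = (lst.map fun a => lMult (f a) z).sum := by
  induction lst with
  | nil => simp [lMult]
  | cons a t ih => simp [List.flatMap_cons, ih]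

lemma lMult_replicate (n : ℕ) (p : ℝ × ℂ) (z : ℂ) :
    lMult (List.replicate n p) z = n * gInd p.1 p.2 z := by
  induction n with
  | zero => simp [lMult]
  | succ k ih => rw [List.replicate_succ, lMult_cons, ih]; ring

lemma list_range_sum (f : ℕ → ℕ) (P : ℕ) :
    ((List.range P).map f).sum = ∑ ρ ∈ Finset.range P, f ρ := by
  induction P with
  | zero => simp
  | succ k ih => rw [List.range_succ, Finset.sum_range_succ, List.map_append, List.sum_append, ih]; simp

lemma lMult_eq_zero (l : List (ℝ × ℂ)) (z : ℂ) (h : ∀ p ∈ l, gInd p.1 p.2 z = 0) :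
    lMult l z = 0 := by
  unfold lMult
  rw [List.map_congr_left h]
  simp

/-- shifting a γ-set by a natural number gives the tail -/
lemma gpt_shift (α : ℝ) (β : ℂ) (N : ℕ) (n : ℤ) :
    gpt α (β + N) n = gpt α β (n + N) := by
  unfold gpt
  push_cast
  ring_nf

lemma gammaSet_shift_subset (α : ℝ) (β : ℂ) (N : ℕ) :
    gammaSet α (β + N) ⊆ gammaSet α β := by
  intro z hz
  rw [mem_gammaSet_iff_s5] at hz ⊢
  obtain ⟨n, rfl⟩ := hz
  refine ⟨n + N, ?_⟩
  rw [gpt_shift]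
  norm_cast

lemma gInd_shift_le (α : ℝ) (β : ℂ) (N : ℕ) (z : ℂ) : gInd α (β + N) z ≤ gInd α β z := by
  by_cases h : z ∈ gammaSet α (β + N)
  · rw [gInd_apply_mem h, gInd_apply_mem (gammaSet_shift_subset α β N h)]
  · rw [gInd_apply_not_mem h]
    exact Nat.zero_le _

lemma gInd_shift_eq {α : ℝ} (hα : α ≠ 0) (β : ℂ) (N : ℕ) (z : ℂ)
    (h : ∀ n : ℕ, n < N → z ≠ gpt α β n) : gInd α (β + N) z = gInd α β z := by
  by_cases hz : z ∈ gammaSet α β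
  · rw [gInd_apply_mem hz]
    rw [mem_gammaSet_iff_s5] at hz
    obtain ⟨n, rfl⟩ := hz
    have hnN : N ≤ n := by
      by_contra hc
      exact h n (by omega) rfl
    apply gInd_apply_mem
    rw [mem_gammaSet_iff_s5]
    refine ⟨n - N, ?_⟩
    rw [gpt_shift]
    congr 1
    push_cast [Nat.cast_sub hnN]
    ring
  · rw [gInd_apply_not_mem hz, gInd_apply_not_mem fun hc => hz (gammaSet_shift_subset α β N hc)]

end Comb

noncomputable section Step

open Function Set

lemma step (α : ℝ) (β : ℂ) (hα : 0 < α) (l : List (ℝ × ℂ)) (hl : ∀ p ∈ l, 0 < p.1)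
    (e : ℂ → ℕ) (he : (Function.support e).Finite) :
    ∃ (l' : List (ℝ × ℂ)) (e' : ℂ → ℕ), (∀ p ∈ l', 0 < p.1) ∧ (Function.support e').Finite ∧
      ∀ z, (lMult l z + e z) - gInd α β z = lMult l' z + e' z := by
  classical
  have hαC : (α : ℂ) ≠ 0 := by exact_mod_cast hα.ne'
  set Pred : ℝ × ℂ → Prop := fun p => gammaSet p.1 p.2 ⊆ grid α β with hPreddef
  set lS := l.filter (fun p => decide (Pred p)) with hlSdef
  set lN := l.filter (fun p => !decide (Pred p)) with hlNdef
  have hperm : (lS ++ lN).Perm l := List.filter_append_perm _ l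
  have hmemS : ∀ p ∈ lS, p ∈ l ∧ Pred p := by
    intro p hp
    rw [hlSdef, List.mem_filter] at hp
    exact ⟨hp.1, by simpa using hp.2⟩
  have hmemN : ∀ p ∈ lN, p ∈ l ∧ ¬ Pred p := by
    intro p hp
    rw [hlNdef, List.mem_filter] at hp
    exact ⟨hp.1, by simpa using hp.2⟩
  -- rational data for the commensurable sets
  have hdata : ∀ p : ℝ × ℂ, ∃ qq : ℚ × ℚ, p ∈ lS → 0 < qq.1 ∧
      (1 : ℂ)/(p.1 : ℂ) = (qq.1 : ℂ)/(α : ℂ) ∧ -p.2/(p.1 : ℂ) = (-β + (qq.2 : ℂ))/(α : ℂ) := by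
    intro p
    by_cases hp : p ∈ lS
    · obtain ⟨hpl, hpred⟩ := hmemS p hp
      obtain ⟨q, q₀, h1, h2, h3⟩ := grid_data hα (hl p hpl) hpred
      exact ⟨(q, q₀), fun _ => ⟨h1, h2, h3⟩⟩
    · exact ⟨(1, 0), fun h => absurd h hp⟩
  choose qq hqq using hdata
  set Q : ℕ := ∏ p ∈ lS.toFinset, ((qq p).1.den * (qq p).2.den) with hQdef
  have hQpos : 0 < Q := Finset.prod_pos (fun p _ =>
    Nat.mul_pos (Nat.pos_of_ne_zero (Rat.den_ne_zero _)) (Nat.pos_of_ne_zero (Rat.den_ne_zero _)))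
  have hQC : ((Q : ℕ) : ℂ) ≠ 0 := by exact_mod_cast hQpos.ne'
  have hdvd1 : ∀ p ∈ lS, ((qq p).1.den : ℕ) ∣ Q := fun p hp =>
    dvd_trans (dvd_mul_right _ _) (Finset.dvd_prod_of_mem _ (List.mem_toFinset.mpr hp))
  have hdvd2 : ∀ p ∈ lS, ((qq p).2.den : ℕ) ∣ Q := fun p hp =>
    dvd_trans (dvd_mul_left _ _) (Finset.dvd_prod_of_mem _ (List.mem_toFinset.mpr hp))
  -- integer step/offset data
  have hcEex : ∀ p : ℝ × ℂ, ∃ a : ℤ, p ∈ lS → (a : ℚ) = (qq p).1 * Q := by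
    intro p
    by_cases hp : p ∈ lS
    · obtain ⟨a, ha⟩ := int_of_den_dvd (hdvd1 p hp); exact ⟨a, fun _ => ha⟩
    · exact ⟨0, fun h => absurd h hp⟩
  have heEex : ∀ p : ℝ × ℂ, ∃ a : ℤ, p ∈ lS → (a : ℚ) = -((qq p).2) * Q := by
    intro p
    by_cases hp : p ∈ lS
    · have hden : ((-(qq p).2).den : ℕ) ∣ Q := by rw [Rat.neg_den]; exact hdvd2 p hp
      obtain ⟨a, ha⟩ := int_of_den_dvd hden; exact ⟨a, fun _ => ha⟩
    · exact ⟨0, fun h => absurd h hp⟩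
  choose cE hcEs using hcEex
  choose eE heEs using heEex
  have hcEpos : ∀ p ∈ lS, 0 < cE p := by
    intro p hp
    have h1 : (0 : ℚ) < (qq p).1 * Q := by
      have := (hqq p hp).1
      have hQ' : (0 : ℚ) < (Q : ℚ) := by exact_mod_cast hQpos
      positivity
    rw [← hcEs p hp] at h1
    exact_mod_cast h1
  set cN : ℝ × ℂ → ℕ := fun p => (cE p).toNat with hcNdef
  have hcNpos : ∀ p ∈ lS, 0 < cN p := fun p hp => by
    have := hcEpos p hp
    simp only [hcNdef]
    omega
  have hcNcast : ∀ p ∈ lS, ((cN p : ℤ)) = cE p := fun p hp =>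
    Int.toNat_of_nonneg (hcEpos p hp).le
  have hcC : ∀ p ∈ lS, ((cN p : ℂ)) = ((qq p).1 : ℂ) * Q := by
    intro p hp
    have h1 : ((cN p : ℚ)) = (qq p).1 * Q := by
      rw [← hcEs p hp]
      exact_mod_cast congrArg (fun x : ℤ => (x : ℚ)) (hcNcast p hp)
    calc ((cN p : ℂ)) = (((cN p : ℚ)) : ℂ) := by norm_cast
      _ = (((qq p).1 * Q : ℚ) : ℂ) := by rw [h1]
      _ = ((qq p).1 : ℂ) * Q := by push_cast; ring
  have heC : ∀ p ∈ lS, ((eE p : ℂ)) = -((qq p).2 : ℂ) * Q := by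
    intro p hp
    calc ((eE p : ℂ)) = (((eE p : ℚ)) : ℂ) := by norm_cast
      _ = ((-((qq p).2) * Q : ℚ) : ℂ) := by rw [heEs p hp]
      _ = -((qq p).2 : ℂ) * Q := by push_cast; ring
  -- the grid
  set dC : ℂ := 1 / ((α : ℂ) * Q) with hdCdef
  have hdCne : dC ≠ 0 := one_div_ne_zero (mul_ne_zero hαC hQC)
  set g : ℤ → ℂ := fun m => -β/(α : ℂ) - (m : ℂ) * dC with hgdef
  have hginj : Function.Injective g := by
    intro m n h
    rw [hgdef] at h
    simp only at h
    have h2 : (m : ℂ) * dC = (n : ℂ) * dC := by linear_combination -h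
    have : ((m : ℂ)) = n := mul_right_cancel₀ hdCne h2
    exact_mod_cast this
  have hgrid : ∀ m : ℤ, g m ∈ grid α β := by
    intro m
    refine ⟨-(m : ℚ)/Q, ?_⟩
    rw [hgdef]
    simp only
    rw [hdCdef]
    push_cast
    field_simp
    ring
  have hWg : ∀ n : ℕ, gpt α β n = g ((n : ℤ) * Q) := by
    intro n
    rw [hgdef]
    simp only [gpt]
    rw [hdCdef]
    push_cast
    field_simp
    ring
  have hgW0 : ∀ z ∉ Set.range g, gInd α β z = 0 := by
    intro z hz
    apply gInd_apply_not_mem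
    intro hmem
    rw [mem_gammaSet_iff_s5] at hmem
    obtain ⟨n, rfl⟩ := hmem
    exact hz ⟨(n : ℤ) * Q, (hWg n).symm⟩
  have hwval : ∀ m : ℤ, gInd α β (g m) = if 0 ≤ m ∧ (Q : ℤ) ∣ m then 1 else 0 := by
    intro m
    have hmem : g m ∈ gammaSet α β ↔ (0 ≤ m ∧ (Q : ℤ) ∣ m) := by
      rw [mem_gammaSet_iff_s5]
      constructor
      · rintro ⟨n, hn⟩
        rw [hWg n] at hn
        have hmn : m = (n : ℤ) * Q := hginj hn
        have h := (ap_mem_iff hQpos 0 m).mp ⟨n, by omega⟩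
        simpa using h
      · rintro h
        obtain ⟨n, hn⟩ := (ap_mem_iff hQpos 0 m).mpr (by simpa using h)
        have hmn : m = (n : ℤ) * Q := by omega
        exact ⟨n, by rw [hWg n, hmn]⟩
    by_cases h : 0 ≤ m ∧ (Q : ℤ) ∣ m
    · rw [if_pos h, gInd_apply_mem (hmem.mpr h)]
    · rw [if_neg h, gInd_apply_not_mem (fun hc => h (hmem.mp hc))]
  -- points of the commensurable sets on the grid
  have hpt : ∀ p ∈ lS, ∀ n : ℕ, gpt p.1 p.2 n = g ((n : ℤ) * cN p + eE p) := by
    intro p hp n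
    have hp1 : ((p.1 : ℝ) : ℂ) ≠ 0 := by exact_mod_cast (hl p (hmemS p hp).1).ne'
    obtain ⟨hq1, hq2, hq3⟩ := hqq p hp
    have hgptval : gpt p.1 p.2 n = -p.2/(p.1 : ℂ) - (n : ℂ) * ((1 : ℂ)/(p.1 : ℂ)) := by
      simp only [gpt]; push_cast; ring
    rw [hgptval, hq2, hq3, hgdef]
    simp only
    rw [hdCdef]
    push_cast
    rw [hcC p hp, heC p hp]
    field_simp
    ring
  have hSsub : ∀ p ∈ lS, gammaSet p.1 p.2 ⊆ Set.range g := by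
    intro p hp z hz
    rw [mem_gammaSet_iff_s5] at hz
    obtain ⟨n, rfl⟩ := hz
    exact ⟨_, (hpt p hp n).symm⟩
  have hgIndS : ∀ p ∈ lS, ∀ m : ℤ,
      gInd p.1 p.2 (g m) = if eE p ≤ m ∧ (cN p : ℤ) ∣ (m - eE p) then 1 else 0 := by
    intro p hp m
    have hmem : g m ∈ gammaSet p.1 p.2 ↔ (eE p ≤ m ∧ (cN p : ℤ) ∣ (m - eE p)) := by
      rw [mem_gammaSet_iff_s5]
      constructor
      · rintro ⟨n, hn⟩
        rw [hpt p hp n] at hn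
        have := hginj hn
        subst this
        exact (ap_mem_iff (hcNpos p hp) (eE p) _).mp ⟨n, rfl⟩
      · intro h
        obtain ⟨n, hn⟩ := (ap_mem_iff (hcNpos p hp) (eE p) m).mpr h
        exact ⟨n, by rw [hpt p hp n, hn]⟩
    by_cases h : eE p ≤ m ∧ (cN p : ℤ) ∣ (m - eE p)
    · rw [if_pos h, gInd_apply_mem (hmem.mpr h)]
    · rw [if_neg h, gInd_apply_not_mem (fun hc => h (hmem.mp hc))]
  have hlS0 : ∀ z ∉ Set.range g, lMult lS z = 0 := by
    intro z hz
    apply lMult_eq_zero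
    intro p hp
    apply gInd_apply_not_mem
    exact fun hc => hz (hSsub p hp hc)
  -- finiteness for the incommensurable sets
  have hNfin : ∀ p ∈ lN, (gammaSet p.1 p.2 ∩ Set.range g).Finite := by
    intro p hp
    by_contra hinf
    obtain ⟨z₁, hz₁, z₂, hz₂, hne⟩ := Set.Infinite.nontrivial hinf
    apply (hmemN p hp).2
    refine grid_subset_of_two hα.ne' (hl p (hmemN p hp).1).ne' hne ⟨hz₁.1, ?_⟩ ⟨hz₂.1, ?_⟩
    · obtain ⟨m, rfl⟩ := hz₁.2; exact hgrid m
    · obtain ⟨m, rfl⟩ := hz₂.2; exact hgrid m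
  -- trimming of the incommensurable sets
  have hNtrim : ∀ p : ℝ × ℂ, ∃ N : ℕ, p ∈ lN → ∀ n : ℕ, N ≤ n → gpt p.1 p.2 (n : ℤ) ∉ Set.range g := by
    intro p
    by_cases hp : p ∈ lN
    · have hpinj : Function.Injective (fun n : ℕ => gpt p.1 p.2 (n : ℤ)) := by
        intro a b hab
        have := gpt_injective (hl p (hmemN p hp).1).ne' p.2 hab
        exact_mod_cast this
      have hfin : {n : ℕ | gpt p.1 p.2 (n : ℤ) ∈ Set.range g}.Finite := by
        have : {n : ℕ | gpt p.1 p.2 (n : ℤ) ∈ Set.range g} ⊆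
            (fun n : ℕ => gpt p.1 p.2 (n : ℤ)) ⁻¹' (gammaSet p.1 p.2 ∩ Set.range g) := by
          intro n hn
          exact ⟨mem_gammaSet_iff_s5.mpr ⟨n, rfl⟩, hn⟩
        exact Set.Finite.subset ((hNfin p hp).preimage hpinj.injOn) this
      obtain ⟨N, hN⟩ := hfin.bddAbove
      refine ⟨N + 1, fun _ n hn hmem => ?_⟩
      have := hN hmem
      omega
    · exact ⟨0, fun h => absurd h hp⟩
  choose NN hNN using hNtrim
  -- the bad set and thresholds
  set B : Set ℂ := Function.support e ∪ ⋃ p ∈ lN.toFinset, (gammaSet p.1 p.2 ∩ Set.range g)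
    with hBdef
  have hBfin : B.Finite :=
    he.union (Set.Finite.biUnion (lN.toFinset.finite_toSet)
      (fun p hp => hNfin p (List.mem_toFinset.mp hp)))
  have hgBfin : {m : ℤ | g m ∈ B}.Finite := hBfin.preimage hginj.injOn
  obtain ⟨M₁, hM₁⟩ := hgBfin.bddAbove
  obtain ⟨M₀, hM₀0, hM₀⟩ := list_bound_above (lS.map eE)
  obtain ⟨L, hL0, hL⟩ := list_bound_below (lS.map eE)
  set M : ℤ := max M₀ (M₁ + 1) with hMdef
  have hMM₀ : M₀ ≤ M := le_max_left _ _
  have hM0 : 0 ≤ M := le_trans hM₀0 hMM₀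
  have hMB : ∀ m : ℤ, M ≤ m → g m ∉ B := by
    intro m hm hmem
    have := hM₁ hmem
    have : M₁ + 1 ≤ M := le_max_right _ _
    omega
  have heEM : ∀ p ∈ lS, eE p ≤ M :=
    fun p hp => le_trans (hM₀ _ (List.mem_map.mpr ⟨p, hp, rfl⟩)) hMM₀
  have heEL : ∀ p ∈ lS, L ≤ eE p :=
    fun p hp => hL _ (List.mem_map.mpr ⟨p, hp, rfl⟩)
  -- the period
  set Pn : ℕ := Q * ∏ p ∈ lS.toFinset, cN p with hPdef
  have hPpos : 0 < Pn :=
    Nat.mul_pos hQpos (Finset.prod_pos fun p hp => hcNpos p (List.mem_toFinset.mp hp))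
  have hPC : ((Pn : ℕ) : ℂ) ≠ 0 := by exact_mod_cast hPpos.ne'
  have hQdvdP : (Q : ℤ) ∣ (Pn : ℤ) := by exact_mod_cast Int.natCast_dvd_natCast.mpr (dvd_mul_right _ _)
  have hcdvdP : ∀ p ∈ lS, (cN p : ℤ) ∣ (Pn : ℤ) := fun p hp =>
    Int.natCast_dvd_natCast.mpr (Dvd.dvd.mul_left (Finset.dvd_prod_of_mem _ (List.mem_toFinset.mpr hp)) _)
  -- the combinatorial counting functions on the grid
  set fZ : ℤ → ℕ := fun m => (lS.map fun p => if eE p ≤ m ∧ (cN p : ℤ) ∣ (m - eE p) then 1 else 0).sum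
    with hfZdef
  set wZ : ℤ → ℕ := fun m => if 0 ≤ m ∧ (Q : ℤ) ∣ m then 1 else 0 with hwZdef
  set hZ : ℤ → ℕ := fun m => fZ m - wZ m with hhZdef
  have hfg : ∀ m : ℤ, lMult lS (g m) = fZ m := by
    intro m
    unfold lMult
    rw [List.map_congr_left (fun p hp => hgIndS p hp m)]
  have hper : ∀ m, M ≤ m → hZ (m + Pn) = hZ m := by
    intro m hm
    have hPnn : (0 : ℤ) ≤ (Pn : ℤ) := by positivity
    have hf : fZ (m + Pn) = fZ m := by
      rw [hfZdef]
      simp only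
      congr 1
      apply List.map_congr_left
      intro p hp
      have h1 : eE p ≤ m := le_trans (heEM p hp) hm
      have h2 : eE p ≤ m + Pn := by omega
      have h3 : (cN p : ℤ) ∣ (m + Pn - eE p) ↔ (cN p : ℤ) ∣ (m - eE p) := by
        rw [show m + Pn - eE p = (Pn : ℤ) + (m - eE p) by ring]
        exact dvd_add_right (hcdvdP p hp)
      simp only [h1, h2, true_and]
      rw [if_congr h3 rfl rfl]
    have hw : wZ (m + Pn) = wZ m := by
      rw [hwZdef]
      simp only
      have h1 : 0 ≤ m := le_trans hM0 hm
      have h2 : 0 ≤ m + Pn := by omega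
      have h3 : (Q : ℤ) ∣ (m + Pn) ↔ (Q : ℤ) ∣ m := by
        rw [add_comm]
        exact dvd_add_right hQdvdP
      simp only [h1, h2, true_and]
      rw [if_congr h3 rfl rfl]
    rw [hhZdef]
    simp only
    rw [hf, hw]
  have hmod := per_ext hZ M Pn hPpos hper
  -- the residue γ-sets
  set A : ℝ := α * Q / Pn with hAdef
  have hApos : 0 < A := by
    rw [hAdef]
    have : (0:ℝ) < Q := by exact_mod_cast hQpos
    have : (0:ℝ) < Pn := by exact_mod_cast hPpos
    positivity
  have hAC : ((A : ℝ) : ℂ) ≠ 0 := by exact_mod_cast hApos.ne'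
  set Bc : ℕ → ℂ := fun ρ => -((A : ℝ) : ℂ) * g (M + ρ) with hBcdef
  have hrespt : ∀ ρ n : ℕ, gpt A (Bc ρ) (n : ℤ) = g (M + ρ + n * Pn) := by
    intro ρ n
    have h1 : gpt A (Bc ρ) (n : ℤ) = -(Bc ρ)/((A : ℝ) : ℂ) - (n : ℂ) * ((1:ℂ)/((A : ℝ) : ℂ)) := by
      simp only [gpt]; push_cast; ring
    have h2 : -(Bc ρ)/((A : ℝ) : ℂ) = g (M + ρ) := by
      rw [hBcdef]
      field_simp
    have h3 : ((1:ℂ)/((A : ℝ) : ℂ)) = (Pn : ℂ) * dC := by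
      rw [hAdef, hdCdef]
      push_cast
      field_simp
    rw [h1, h2, h3, hgdef]
    simp only
    push_cast
    ring
  have hres0 : ∀ z ∉ Set.range g, ∀ ρ : ℕ, gInd A (Bc ρ) z = 0 := by
    intro z hz ρ
    apply gInd_apply_not_mem
    intro hmem
    rw [mem_gammaSet_iff_s5] at hmem
    obtain ⟨n, rfl⟩ := hmem
    exact hz ⟨_, (hrespt ρ n).symm⟩
  have hresind : ∀ ρ : ℕ, ∀ m : ℤ,
      gInd A (Bc ρ) (g m) = if ((M + ρ : ℤ) ≤ m ∧ (Pn : ℤ) ∣ (m - (M + ρ))) then 1 else 0 := by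
    intro ρ m
    have hmem : g m ∈ gammaSet A (Bc ρ) ↔ ((M + ρ : ℤ) ≤ m ∧ (Pn : ℤ) ∣ (m - (M + ρ))) := by
      rw [mem_gammaSet_iff_s5]
      constructor
      · rintro ⟨n, hn⟩
        rw [hrespt ρ n] at hn
        have := hginj hn
        subst this
        exact (ap_mem_iff hPpos (M + ρ) _).mp ⟨n, by ring⟩
      · intro h
        obtain ⟨n, hn⟩ := (ap_mem_iff hPpos (M + ρ) m).mpr h
        exact ⟨n, by rw [hrespt ρ n, hn]; ring_nf⟩
    by_cases h : (M + ρ : ℤ) ≤ m ∧ (Pn : ℤ) ∣ (m - (M + ρ))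
    · rw [if_pos h, gInd_apply_mem (hmem.mpr h)]
    · rw [if_neg h, gInd_apply_not_mem (fun hc => h (hmem.mp hc))]
  set resL : List (ℝ × ℂ) := (List.range Pn).flatMap
    (fun ρ : ℕ => List.replicate (hZ (M + ρ)) (A, Bc ρ)) with hresLdef
  have hresmem : ∀ p ∈ resL, ∃ ρ : ℕ, ρ < Pn ∧ p = (A, Bc ρ) := by
    intro p hp
    rw [hresLdef, List.mem_flatMap] at hp
    obtain ⟨ρ, hρ, hpmem⟩ := hp
    exact ⟨ρ, List.mem_range.mp hρ, (List.eq_of_mem_replicate hpmem)⟩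
  have hres_zero_off : ∀ z ∉ Set.range g, lMult resL z = 0 := by
    intro z hz
    apply lMult_eq_zero
    intro p hp
    obtain ⟨ρ, _, rfl⟩ := hresmem p hp
    exact hres0 z hz ρ
  have hresval : ∀ m : ℤ, lMult resL (g m) =
      if M ≤ m then hZ (M + (m - M) % Pn) else 0 := by
    intro m
    have h1 : lMult resL (g m)
        = ∑ ρ ∈ Finset.range Pn, hZ (M + ρ) * gInd A (Bc ρ) (g m) := by
      rw [hresLdef, lMult_flatMap, ← list_range_sum]
      congr 1
      apply List.map_congr_left
      intro ρ _
      exact lMult_replicate _ _ _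
    rw [h1]
    by_cases hm : M ≤ m
    · rw [if_pos hm]
      have hPnz : (0:ℤ) < (Pn : ℤ) := by exact_mod_cast hPpos
      set r : ℤ := (m - M) % Pn with hrdef
      have hr0 : 0 ≤ r := Int.emod_nonneg _ hPnz.ne'
      have hrlt : r < Pn := Int.emod_lt_of_pos _ hPnz
      have hrdvd : (Pn : ℤ) ∣ (m - M - r) := Int.dvd_self_sub_of_emod_eq rfl
      set ρ₀ : ℕ := r.toNat with hρ₀def
      have hρ₀cast : ((ρ₀ : ℕ) : ℤ) = r := Int.toNat_of_nonneg hr0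
      have hρ₀lt : ρ₀ < Pn := by omega
      rw [Finset.sum_eq_single ρ₀]
      · rw [hresind ρ₀ m]
        have hcond : (M + ρ₀ : ℤ) ≤ m ∧ (Pn : ℤ) ∣ (m - (M + ρ₀)) := by
          constructor
          · -- r ≤ m - M
            obtain ⟨t, ht⟩ := hrdvd
            have htnn : 0 ≤ t := by
              by_contra hc
              push_neg at hc
              have : (Pn : ℤ) * t ≤ -Pn := by
                have : t ≤ -1 := by omega
                nlinarith
              omega
            have : 0 ≤ (Pn : ℤ) * t := by positivity
            omega
          · rw [hρ₀cast, show m - (M + r) = m - M - r by ring]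
            exact hrdvd
        rw [if_pos hcond, mul_one, hρ₀cast]
      · intro ρ hρmem hρne
        rw [hresind ρ m]
        rw [if_neg, mul_zero]
        rintro ⟨hc1, hc2⟩
        apply hρne
        have hρlt : ρ < Pn := Finset.mem_range.mp hρmem
        -- from hc2 and hrdvd, Pn ∣ (ρ - r), and both in [0, Pn)
        have hd : (Pn : ℤ) ∣ ((ρ : ℤ) - r) := by
          have := Int.dvd_sub hrdvd hc2
          have h3 : m - M - r - (m - (M + ρ)) = (ρ : ℤ) - r := by ring
          rwa [h3] at this
        obtain ⟨t, ht⟩ := hd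
        have htz : t = 0 := by
          by_contra hc
          rcases lt_or_gt_of_ne hc with h | h
          · have : (Pn : ℤ) * t ≤ -Pn := by nlinarith
            omega
          · have : (Pn : ℤ) * t ≥ Pn := by nlinarith
            omega
        rw [htz, mul_zero] at ht
        omega
      · intro hc
        exact absurd (Finset.mem_range.mpr hρ₀lt) hc
    · rw [if_neg hm]
      apply Finset.sum_eq_zero
      intro ρ _
      rw [hresind ρ m, if_neg, mul_zero]
      rintro ⟨hc1, _⟩
      have : (0:ℤ) ≤ ρ := by positivity
      omega
  -- the new list
  set lN' : List (ℝ × ℂ) := lN.map (fun p => (p.1, p.2 + (NN p : ℂ))) with hlN'def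
  set l' : List (ℝ × ℂ) := lN' ++ resL with hl'def
  have hlN'val : ∀ z, lMult lN' z = (lN.map fun p => gInd p.1 (p.2 + (NN p : ℂ)) z).sum := by
    intro z
    rw [hlN'def]
    unfold lMult
    rw [List.map_map]
    rfl
  have hlN'le : ∀ z, lMult lN' z ≤ lMult lN z := by
    intro z
    rw [hlN'val]
    unfold lMult
    apply List.sum_le_sum
    intro p _
    exact gInd_shift_le p.1 p.2 (NN p) z
  have hlN'range : ∀ m : ℤ, lMult lN' (g m) = 0 := by
    intro m
    rw [hlN'val]
    have : ∀ p ∈ lN, gInd p.1 (p.2 + (NN p : ℂ)) (g m) = 0 := by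
      intro p hp
      apply gInd_apply_not_mem
      intro hmem
      rw [mem_gammaSet_iff_s5] at hmem
      obtain ⟨n, hn⟩ := hmem
      rw [gpt_shift] at hn
      have hcast : ((n : ℤ) + (NN p : ℤ)) = ((n + NN p : ℕ) : ℤ) := by push_cast; ring
      rw [hcast] at hn
      exact hNN p hp (n + NN p) (by omega) ⟨m, hn⟩
    rw [List.map_congr_left this]
    simp
  set headSet : Set ℂ :=
    ⋃ p ∈ lN.toFinset, ((fun n : ℕ => gpt p.1 p.2 (n : ℤ)) '' (Set.Iio (NN p))) with hheaddef
  have hheadfin : headSet.Finite :=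
    Set.Finite.biUnion (lN.toFinset.finite_toSet)
      (fun p _ => (Set.finite_Iio _).image _)
  have hlN'eq : ∀ z, z ∉ headSet → lMult lN' z = lMult lN z := by
    intro z hz
    rw [hlN'val]
    unfold lMult
    congr 1
    apply List.map_congr_left
    intro p hp
    apply gInd_shift_eq (hl p (hmemN p hp).1).ne'
    intro n hn hcontra
    apply hz
    rw [hheaddef]
    apply Set.mem_biUnion (List.mem_toFinset.mpr hp)
    exact ⟨n, hn, hcontra.symm⟩
  have hlNB : ∀ m : ℤ, g m ∉ B → lMult lN (g m) = 0 := by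
    intro m hmB
    apply lMult_eq_zero
    intro p hp
    apply gInd_apply_not_mem
    intro hmem
    apply hmB
    rw [hBdef]
    right
    exact Set.mem_biUnion (List.mem_toFinset.mpr hp) ⟨hmem, ⟨m, rfl⟩⟩
  have heB : ∀ z, z ∉ B → e z = 0 := by
    intro z hz
    by_contra hc
    exact hz (Or.inl hc)
  -- the exceptional set
  set C : Set ℂ := (B ∪ headSet) ∪ (g '' (Set.Ico L M)) with hCdef
  have hCfin : C.Finite := (hBfin.union hheadfin).union ((Set.finite_Ico L M).image g)
  have hlval : ∀ z, lMult l z = lMult lS z + lMult lN z := by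
    intro z
    rw [← lMult_perm hperm z, lMult_append]
  have hl'val : ∀ z, lMult l' z = lMult lN' z + lMult resL z := by
    intro z
    rw [hl'def, lMult_append]
  -- main equality off the exceptional set
  have KEQ : ∀ z ∉ C, lMult l' z = (lMult l z + e z) - gInd α β z := by
    intro z hz
    rw [hCdef] at hz
    simp only [Set.mem_union, not_or] at hz
    obtain ⟨⟨hzB, hzH⟩, hzI⟩ := hz
    by_cases hrg : z ∈ Set.range g
    · obtain ⟨m, rfl⟩ := hrg
      rw [hlval, hl'val, hlN'range m, hfg m, hwval m, hresval m,
        hlNB m hzB, heB _ hzB]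
      by_cases hm : M ≤ m
      · rw [if_pos hm, ← hmod m hm]
        show 0 + (fZ m - wZ m) = fZ m + 0 + 0 - wZ m
        omega
      · rw [if_neg hm]
        have hmL : m < L := by
          by_contra hc
          push_neg at hc
          exact hzI ⟨m, ⟨hc, by omega⟩, rfl⟩
        have hf0 : fZ m = 0 := by
          rw [hfZdef]
          simp only
          have : ∀ p ∈ lS, (if eE p ≤ m ∧ (cN p : ℤ) ∣ (m - eE p) then 1 else 0) = 0 := by
            intro p hp
            rw [if_neg]
            rintro ⟨hc1, _⟩
            have := heEL p hp
            omega
          rw [List.map_congr_left this]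
          simp
        have hw0 : (if (0:ℤ) ≤ m ∧ (Q : ℤ) ∣ m then 1 else 0) = 0 := by
          rw [if_neg]
          rintro ⟨hc1, _⟩
          omega
        rw [hf0, hw0]
    · rw [hlval, hl'val, hres_zero_off z hrg, hlN'eq z hzH, hgW0 z hrg,
        hlS0 z hrg, heB _ hzB]
      omega
  -- main inequality everywhere
  have KLE : ∀ z, lMult l' z ≤ (lMult l z + e z) - gInd α β z := by
    intro z
    by_cases hrg : z ∈ Set.range g
    · obtain ⟨m, rfl⟩ := hrg
      by_cases hm : M ≤ m
      · have hzB : g m ∉ B := hMB m hm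
        have hzH : g m ∉ headSet := by
          intro hc
          rw [hheaddef] at hc
          simp only [Set.mem_iUnion] at hc
          obtain ⟨p, hp, n, _, hn⟩ := hc
          apply hzB
          rw [hBdef]
          right
          refine Set.mem_biUnion hp ⟨?_, ⟨m, rfl⟩⟩
          rw [← hn]
          exact mem_gammaSet_iff_s5.mpr ⟨n, rfl⟩
        have hzI : g m ∉ g '' (Set.Ico L M) := by
          rintro ⟨m', hm', heq⟩
          have := hginj heq
          subst this
          exact absurd hm' (by simp [Set.mem_Ico]; intro _; omega)
        rw [KEQ (g m) (by rw [hCdef]; simp only [Set.mem_union, not_or]; exact ⟨⟨hzB, hzH⟩, hzI⟩)]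
      · rw [hl'val, hlN'range m, hresval m, if_neg hm]
        exact Nat.zero_le _
    · rw [hl'val, hres_zero_off z hrg, hgW0 z hrg]
      have h1 := hlN'le z
      have h2 := hlval z
      omega
  -- conclusion
  refine ⟨l', fun z => ((lMult l z + e z) - gInd α β z) - lMult l' z, ?_, ?_, ?_⟩
  · intro p hp
    rw [hl'def, List.mem_append] at hp
    rcases hp with hp | hp
    · rw [hlN'def, List.mem_map] at hp
      obtain ⟨p₀, hp₀, rfl⟩ := hp
      exact hl p₀ (hmemN p₀ hp₀).1
    · obtain ⟨ρ, _, rfl⟩ := hresmem p hp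
      exact hApos
  · apply hCfin.subset
    intro z hz
    simp only [Function.mem_support] at hz
    by_contra hc
    apply hz
    show lMult l z + e z - gInd α β z - lMult l' z = 0
    rw [KEQ z hc]
    omega
  · intro z
    have h := KLE z
    show lMult l z + e z - gInd α β z = lMult l' z + (lMult l z + e z - gInd α β z - lMult l' z)
    omega

end Step

noncomputable section Core

lemma core (l₂ : List (ℝ × ℂ)) : ∀ (l₁ : List (ℝ × ℂ)) (e : ℂ → ℕ),
    (∀ p ∈ l₁, 0 < p.1) → (∀ p ∈ l₂, 0 < p.1) → (Function.support e).Finite →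
    ∃ (l' : List (ℝ × ℂ)) (e' : ℂ → ℕ), (∀ p ∈ l', 0 < p.1) ∧ (Function.support e').Finite ∧
      ∀ z, (lMult l₁ z + e z) - lMult l₂ z = lMult l' z + e' z := by
  induction l₂ with
  | nil => intro l₁ e h1 _ he; exact ⟨l₁, e, h1, he, fun z => by simp⟩
  | cons p t ih =>
      intro l₁ e h1 h2 he
      obtain ⟨l₁', e₁', hpos₁, hfin₁, heq₁⟩ :=
        step p.1 p.2 (h2 p List.mem_cons_self) l₁ h1 e he
      obtain ⟨l', e', hpos, hfin, heq⟩ :=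
        ih l₁' e₁' hpos₁ (fun q hq => h2 q (List.mem_cons_of_mem _ hq)) hfin₁
      refine ⟨l', e', hpos, hfin, fun z => ?_⟩
      have h₁ := heq₁ z
      have h₂ := heq z
      rw [lMult_cons]
      omega

end Core

/-- **Corollary.** If `V₁ = ∑_{i=1}^r W_i¹` and `V₂ = ∑_{j=1}^s W_j²` are finite multiset sums
of γ-sets, then the multiset difference `V₁ \ V₂` is either finite or has strictly positive
density; in the latter case it is a union (multiset sum) of γ-sets and a finite multiset. -/
theorem gammaMultiset_diff (r s : ℕ) (α₁ : Fin r → ℝ) (β₁ : Fin r → ℂ)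
    (α₂ : Fin s → ℝ) (β₂ : Fin s → ℂ) (hα₁ : ∀ i, 0 < α₁ i) (hα₂ : ∀ j, 0 < α₂ j) :
    (Function.support fun z => gammaMult α₁ β₁ z - gammaMult α₂ β₂ z).Finite ∨
    ((∃ d : ℝ, 0 < d ∧ HasMultDensity (fun z => gammaMult α₁ β₁ z - gammaMult α₂ β₂ z) d) ∧
      ∃ (k : ℕ) (αs : Fin k → ℝ) (βs : Fin k → ℂ) (e : ℂ → ℕ),
        (∀ i, 0 < αs i) ∧ (Function.support e).Finite ∧
        ∀ z : ℂ, gammaMult α₁ β₁ z - gammaMult α₂ β₂ z = gammaMult αs βs z + e z) := by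
  classical
  set m : ℂ → ℕ := fun z => gammaMult α₁ β₁ z - gammaMult α₂ β₂ z with hm
  set L₁ := List.ofFn (fun i => (α₁ i, β₁ i)) with hL₁
  set L₂ := List.ofFn (fun j => (α₂ j, β₂ j)) with hL₂
  have hL₁pos : ∀ p ∈ L₁, 0 < p.1 := by
    intro p hp
    rw [hL₁, List.mem_ofFn] at hp
    obtain ⟨i, rfl⟩ := hp
    exact hα₁ i
  have hL₂pos : ∀ p ∈ L₂, 0 < p.1 := by
    intro p hp
    rw [hL₂, List.mem_ofFn] at hp
    obtain ⟨j, rfl⟩ := hp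
    exact hα₂ j
  obtain ⟨l', e', hpos, hfin, heq⟩ := core L₂ L₁ (fun _ => 0) hL₁pos hL₂pos (by simp)
  have hkey : ∀ z, m z = lMult l' z + e' z := by
    intro z
    rw [hm]
    simp only
    rw [gammaMult_eq_lMult α₁ β₁ z, gammaMult_eq_lMult α₂ β₂ z]
    have h := heq z
    simpa using h
  set k := l'.length with hk
  set αs : Fin k → ℝ := fun i => (l'.get i).1 with hαs
  set βs : Fin k → ℂ := fun i => (l'.get i).2 with hβs
  have hgm : ∀ z, lMult l' z = gammaMult αs βs z := fun z => lMult_eq_gammaMult l' z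
  have hαspos : ∀ i, 0 < αs i := fun i => hpos _ (List.get_mem l' i)
  by_cases hk0 : k = 0
  · left
    have hnil : l' = [] := List.length_eq_zero_iff.mp hk0
    apply hfin.subset
    intro z hz
    simp only [Function.mem_support] at hz ⊢
    have h1 : m z ≠ 0 := hz
    rw [hkey z, hnil] at h1
    simpa [lMult] using h1
  · right
    have hmdecomp : ∀ z, m z = gammaMult αs βs z + e' z := fun z => by rw [hkey z, hgm z]
    constructor
    · refine ⟨∑ i, αs i, ?_, ?_⟩
      · have hkpos : 0 < k := Nat.pos_of_ne_zero hk0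
        exact Finset.sum_pos (fun i _ => hαspos i) ⟨⟨0, hkpos⟩, Finset.mem_univ _⟩
      · exact hasMultDensity_decomp αs βs e' hαspos hfin m hmdecomp
    · exact ⟨k, αs, βs, e', hαspos, hfin, hmdecomp⟩
end
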